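/- The following are equivalent: (i) S² is co-inner, i.e. there exists a convolution invertible ω ∈ H* such that S²(h) = ω(h₁)h₂ω⁻¹(h₃) for all h ∈ H; (ii) there exist linear maps ρ, τ : H ⊗ H → k such that λ(lh) = ρ(h₁ ⊗ l₁)·λ(h₂l₂)·τ(h₃ ⊗ l₃) for all h, l ∈ H. -/

import Mathlib

open TensorProduct Coalgebra HopfAlgebra

variable {k H : Type*} [Field k] [Ring H] [HopfAlgebra k H]

/-- The antipode of `H`, as a linear map. -/
local notation "𝐒" => HopfAlgebra.antipode (R := k)

/-- Convolution product on the dual of `H`: `(conv f g) h = f h₁ * g h₂`. -/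
noncomputable def conv (f g : H →ₗ[k] k) : H →ₗ[k] k :=
  (LinearMap.mul' k k) ∘ₗ (TensorProduct.map f g) ∘ₗ (Coalgebra.comul (R := k))

/-- `h ↦ f h₁ • h₂`. -/
noncomputable def lT (f : H →ₗ[k] k) : H →ₗ[k] H :=
  (TensorProduct.lid k H).toLinearMap ∘ₗ (f.rTensor H) ∘ₗ (Coalgebra.comul (R := k))

/-- The Sweedler sum `h ↦ f h₁ • p h₃ • g h₂`. -/
noncomputable def sw3 (f : H →ₗ[k] k) (g : H →ₗ[k] H) (p : H →ₗ[k] k) : H →ₗ[k] H :=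
  (TensorProduct.lid k H).toLinearMap
    ∘ₗ (TensorProduct.rid k (k ⊗[k] H)).toLinearMap
    ∘ₗ (TensorProduct.map (TensorProduct.map f g) p)
    ∘ₗ ((Coalgebra.comul (R := k)).rTensor H)
    ∘ₗ (Coalgebra.comul (R := k))

/-- `χ(h) = α(h₂) • S⁻²(h₁)`, the generalized Nakayama automorphism. -/
noncomputable def chiMap (Sinv : H →ₗ[k] H) (f : H →ₗ[k] k) : H →ₗ[k] H :=
  (TensorProduct.rid k H).toLinearMap
    ∘ₗ (TensorProduct.map (Sinv ∘ₗ Sinv) f)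
    ∘ₗ (Coalgebra.comul (R := k))

/-- `f(R¹) • R²` for `R = R¹ ⊗ R² ∈ H ⊗ H`. -/
noncomputable def lap (f : H →ₗ[k] k) : (H ⊗[k] H) →ₗ[k] H :=
  (TensorProduct.lid k H).toLinearMap ∘ₗ (f.rTensor H)

/-- `f(R²) • R¹` for `R = R¹ ⊗ R² ∈ H ⊗ H`. -/
noncomputable def rap (f : H →ₗ[k] k) : (H ⊗[k] H) →ₗ[k] H :=
  (TensorProduct.rid k H).toLinearMap ∘ₗ (LinearMap.lTensor H f)

/-- The Drinfeld element `u = S(R²)R¹`. -/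
noncomputable def uElt (Rm : H ⊗[k] H) : H :=
  (LinearMap.mul' k H)
    ((TensorProduct.comm k H H)
      ((LinearMap.lTensor H (HopfAlgebra.antipode (R := k))) Rm))

/-- Convolution product on the dual of `H ⊗ H`. -/
noncomputable def conv2 (f g : (H ⊗[k] H) →ₗ[k] k) : (H ⊗[k] H) →ₗ[k] k :=
  (LinearMap.mul' k k) ∘ₗ (TensorProduct.map f g) ∘ₗ (Coalgebra.comul (R := k) (A := H ⊗[k] H))

/-- `(h ⊗ l) ↦ σ(h₂ ⊗ l₂) • (l₁ * h₁)`. -/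
noncomputable def ac1 (σ : (H ⊗[k] H) →ₗ[k] k) : (H ⊗[k] H) →ₗ[k] H :=
  (TensorProduct.rid k H).toLinearMap
    ∘ₗ (TensorProduct.map ((LinearMap.mul' k H) ∘ₗ (TensorProduct.comm k H H).toLinearMap) σ)
    ∘ₗ (TensorProduct.tensorTensorTensorComm k H H H H).toLinearMap
    ∘ₗ (TensorProduct.map (Coalgebra.comul (R := k)) (Coalgebra.comul (R := k)))

/-- `(h ⊗ l) ↦ σ(h₁ ⊗ l₁) • (h₂ * l₂)`. -/
noncomputable def ac2 (σ : (H ⊗[k] H) →ₗ[k] k) : (H ⊗[k] H) →ₗ[k] H :=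
  (TensorProduct.lid k H).toLinearMap
    ∘ₗ (TensorProduct.map σ (LinearMap.mul' k H))
    ∘ₗ (TensorProduct.tensorTensorTensorComm k H H H H).toLinearMap
    ∘ₗ (TensorProduct.map (Coalgebra.comul (R := k)) (Coalgebra.comul (R := k)))

/-- `(h ⊗ l) ↦ ρ(h₁ ⊗ l₁) * lam(h₂ * l₂) * τ(h₃ ⊗ l₃)`. -/
noncomputable def trip (lam : H →ₗ[k] k) (ρ τ : (H ⊗[k] H) →ₗ[k] k) : (H ⊗[k] H) →ₗ[k] k :=
  (LinearMap.mul' k k)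
    ∘ₗ ((LinearMap.mul' k k).rTensor k)
    ∘ₗ (TensorProduct.map (TensorProduct.map ρ (lam ∘ₗ (LinearMap.mul' k H))) τ)
    ∘ₗ ((TensorProduct.tensorTensorTensorComm k H H H H).toLinearMap.rTensor (H ⊗[k] H))
    ∘ₗ (TensorProduct.tensorTensorTensorComm k (H ⊗[k] H) H (H ⊗[k] H) H).toLinearMap
    ∘ₗ (TensorProduct.map
          (((Coalgebra.comul (R := k)).rTensor H) ∘ₗ (Coalgebra.comul (R := k)))
          (((Coalgebra.comul (R := k)).rTensor H) ∘ₗ (Coalgebra.comul (R := k))))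

/-- `u(h) = σ(h₂ ⊗ S h₁)`. -/
noncomputable def uF (σ : (H ⊗[k] H) →ₗ[k] k) : H →ₗ[k] k :=
  σ ∘ₗ (TensorProduct.comm k H H).toLinearMap
    ∘ₗ ((HopfAlgebra.antipode (R := k)).rTensor H) ∘ₗ (Coalgebra.comul (R := k))

/-- `v(h) = σ(h₁ ⊗ S h₂)`. -/
noncomputable def vF (σ : (H ⊗[k] H) →ₗ[k] k) : H →ₗ[k] k :=
  σ ∘ₗ (LinearMap.lTensor H (HopfAlgebra.antipode (R := k))) ∘ₗ (Coalgebra.comul (R := k))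

/-- `u⁻¹(h) = σ(S²(h₂) ⊗ h₁)`. -/
noncomputable def uinvF (σ : (H ⊗[k] H) →ₗ[k] k) : H →ₗ[k] k :=
  σ ∘ₗ (((HopfAlgebra.antipode (R := k)) ∘ₗ (HopfAlgebra.antipode (R := k))).rTensor H)
    ∘ₗ (TensorProduct.comm k H H).toLinearMap ∘ₗ (Coalgebra.comul (R := k))

/-- `v⁻¹(h) = σ(S²(h₁) ⊗ h₂)`. -/
noncomputable def vinvF (σ : (H ⊗[k] H) →ₗ[k] k) : H →ₗ[k] k :=
  σ ∘ₗ (((HopfAlgebra.antipode (R := k)) ∘ₗ (HopfAlgebra.antipode (R := k))).rTensor H)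
    ∘ₗ (Coalgebra.comul (R := k))


variable {M : Type*} [AddCommMonoid M] [Module k M]
variable {A : Type*} [Semiring A] [Algebra k A]
lemma repr_sum (Φ : H →ₗ[k] H →ₗ[k] M) {x : H} {ι : Type*} (rr : Coalgebra.Repr k x ι) :
    ∑ i ∈ rr.index, Φ (rr.left i) (rr.right i)
      = TensorProduct.lift Φ (Coalgebra.comul (R := k) x) := by
  rw [← rr.eq, map_sum]; simp

lemma repr_sum_eq (Φ : H →ₗ[k] H →ₗ[k] M) {x : H} {ι κ : Type*} (r1 : Coalgebra.Repr k x ι) (r2 : Coalgebra.Repr k x κ) :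
    ∑ i ∈ r1.index, Φ (r1.left i) (r1.right i)
      = ∑ i ∈ r2.index, Φ (r2.left i) (r2.right i) := by
  rw [repr_sum Φ r1, repr_sum Φ r2]

lemma coassoc_sum (Φ : H →ₗ[k] H →ₗ[k] H →ₗ[k] M) {x : H} {ι : Type*} (rr : Coalgebra.Repr k x ι)
    {κ : Type*} (rL : ∀ i, Coalgebra.Repr k (rr.left i) κ) {κ' : Type*} (rR : ∀ i, Coalgebra.Repr k (rr.right i) κ') :
    ∑ i ∈ rr.index, ∑ j ∈ (rL i).index,
        Φ ((rL i).left j) ((rL i).right j) (rr.right i)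
      = ∑ i ∈ rr.index, ∑ j ∈ (rR i).index,
        Φ (rr.left i) ((rR i).left j) ((rR i).right j) := by
  have h := Coalgebra.sum_tmul_tmul_eq rr rL rR
  have := congrArg (TensorProduct.lift ((TensorProduct.lift.equiv (RingHom.id k) H H M).toLinearMap ∘ₗ Φ)) h
  simpa [map_sum] using this

lemma counit_sum_left (G : H →ₗ[k] M) {x : H} {ι : Type*} (rr : Coalgebra.Repr k x ι) :
    ∑ i ∈ rr.index, Coalgebra.counit (R := k) (rr.left i) • G (rr.right i) = G x := by
  have h2 := congrArg ((TensorProduct.lid k M).toLinearMap ∘ₗ (LinearMap.lTensor k G))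
    (Coalgebra.sum_counit_tmul_eq rr)
  simpa only [map_sum, LinearMap.coe_comp, LinearEquiv.coe_coe, Function.comp_apply,
    LinearMap.lTensor_tmul, lid_tmul, one_smul] using h2

lemma counit_sum_right (G : H →ₗ[k] M) {x : H} {ι : Type*} (rr : Coalgebra.Repr k x ι) :
    ∑ i ∈ rr.index, Coalgebra.counit (R := k) (rr.right i) • G (rr.left i) = G x := by
  have h2 := congrArg ((TensorProduct.rid k M).toLinearMap ∘ₗ (LinearMap.rTensor k G))
    (Coalgebra.sum_tmul_counit_eq rr)
  simpa only [map_sum, LinearMap.coe_comp, LinearEquiv.coe_coe, Function.comp_apply,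
    LinearMap.rTensor_tmul, rid_tmul, one_smul] using h2
variable {A : Type*} [Semiring A] [Algebra k A]

/-- bilinear constructor: `(a, b) ↦ φ a * ψ b`. -/
noncomputable def bi2 (φ ψ : H →ₗ[k] A) : H →ₗ[k] H →ₗ[k] A :=
  LinearMap.mk₂ k (fun a b => φ a * ψ b)
    (by intros; simp [add_mul]) (by intros; simp [smul_mul_assoc])
    (by intros; simp [mul_add]) (by intros; simp [mul_smul_comm])

@[simp] lemma bi2_apply (φ ψ : H →ₗ[k] A) (a b : H) : bi2 φ ψ a b = φ a * ψ b := rfl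

/-- trilinear constructor: `(a, b, c) ↦ φ a * ψ b * ξ c`. -/
noncomputable def tri3 (φ ψ ξ : H →ₗ[k] A) : H →ₗ[k] H →ₗ[k] H →ₗ[k] A :=
  LinearMap.mk₂ k (fun a b => LinearMap.mul k A (φ a * ψ b) ∘ₗ ξ)
    (by intros; ext c; simp [add_mul]) (by intros; ext c; simp [smul_mul_assoc])
    (by intros; ext c; simp [mul_add, add_mul]) (by intros; ext c; simp [mul_smul_comm])

@[simp] lemma tri3_apply (φ ψ ξ : H →ₗ[k] A) (a b c : H) :
    tri3 φ ψ ξ a b c = φ a * ψ b * ξ c := rfl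

/-- `x ↦ ∑ Ψ x₁ x₂` -/
noncomputable def cw2 (Ψ : H →ₗ[k] H →ₗ[k] M) : H →ₗ[k] M :=
  TensorProduct.lift Ψ ∘ₗ Coalgebra.comul (R := k)

lemma cw2_apply (Ψ : H →ₗ[k] H →ₗ[k] M) {x : H} {ι : Type*} (rr : Coalgebra.Repr k x ι) :
    cw2 Ψ x = ∑ i ∈ rr.index, Ψ (rr.left i) (rr.right i) := by
  rw [cw2]; simp only [LinearMap.coe_comp, Function.comp_apply]
  rw [← rr.eq, map_sum]; simp

/-- Repr of a product. -/
noncomputable def mulRepr {x y : H} {ι κ : Type*} (rx : Coalgebra.Repr k x ι) (ry : Coalgebra.Repr k y κ) :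
    Coalgebra.Repr k (x * y) (ι × κ) where
  index := rx.index ×ˢ ry.index
  left := fun p => rx.left p.1 * ry.left p.2
  right := fun p => rx.right p.1 * ry.right p.2
  eq := by
    rw [Bialgebra.comul_mul, ← rx.eq, ← ry.eq, Finset.sum_mul_sum]
    rw [Finset.sum_product]
    simp [Algebra.TensorProduct.tmul_mul_tmul]

@[simp] lemma mulRepr_index {x y : H} {ι κ : Type*} (rx : Coalgebra.Repr k x ι) (ry : Coalgebra.Repr k y κ) :
    (mulRepr rx ry).index = rx.index ×ˢ ry.index := rfl
@[simp] lemma mulRepr_left {x y : H} {ι κ : Type*} (rx : Coalgebra.Repr k x ι) (ry : Coalgebra.Repr k y κ) (p) :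
    (mulRepr rx ry).left p = rx.left p.1 * ry.left p.2 := rfl
@[simp] lemma mulRepr_right {x y : H} {ι κ : Type*} (rx : Coalgebra.Repr k x ι) (ry : Coalgebra.Repr k y κ) (p) :
    (mulRepr rx ry).right p = rx.right p.1 * ry.right p.2 := rfl

/-- convolution of maps into an algebra -/
noncomputable def cv (φ ψ : H →ₗ[k] A) : H →ₗ[k] A :=
  (LinearMap.mul' k A) ∘ₗ (TensorProduct.map φ ψ) ∘ₗ (Coalgebra.comul (R := k))

lemma cv_apply (φ ψ : H →ₗ[k] A) {x : H} {ι : Type*} (rr : Coalgebra.Repr k x ι) :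
    cv φ ψ x = ∑ i ∈ rr.index, φ (rr.left i) * ψ (rr.right i) := by
  rw [cv]; simp only [LinearMap.coe_comp, Function.comp_apply]
  rw [← rr.eq, map_sum, map_sum]; simp

noncomputable def unitA : H →ₗ[k] A := (Algebra.linearMap k A) ∘ₗ (Coalgebra.counit (R := k))

@[simp] lemma unitA_apply (x : H) :
    (unitA (A := A) (k := k) x) = Coalgebra.counit (R := k) x • 1 := by
  simp [unitA, Algebra.algebraMap_eq_smul_one]

lemma cv_assoc (φ ψ ξ : H →ₗ[k] A) : cv (cv φ ψ) ξ = cv φ (cv ψ ξ) := by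
  ext x
  rw [cv_apply _ _ (ℛ k x), cv_apply _ _ (ℛ k x)]
  have h1 : ∀ i ∈ (ℛ k x).index, cv φ ψ ((ℛ k x).left i) * ξ ((ℛ k x).right i)
      = ∑ j ∈ (ℛ k ((ℛ k x).left i)).index,
          tri3 φ ψ ξ ((ℛ k ((ℛ k x).left i)).left j) ((ℛ k ((ℛ k x).left i)).right j) ((ℛ k x).right i) := by
    intro i _
    rw [cv_apply _ _ (ℛ k ((ℛ k x).left i)), Finset.sum_mul]
    simp
  have h2 : ∀ i ∈ (ℛ k x).index, φ ((ℛ k x).left i) * cv ψ ξ ((ℛ k x).right i)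
      = ∑ j ∈ (ℛ k ((ℛ k x).right i)).index,
          tri3 φ ψ ξ ((ℛ k x).left i) ((ℛ k ((ℛ k x).right i)).left j) ((ℛ k ((ℛ k x).right i)).right j) := by
    intro i _
    rw [cv_apply _ _ (ℛ k ((ℛ k x).right i)), Finset.mul_sum]
    simp [mul_assoc]
  rw [Finset.sum_congr rfl h1, Finset.sum_congr rfl h2]
  exact coassoc_sum (tri3 φ ψ ξ) (ℛ k x) _ _

lemma cv_unit_left (φ : H →ₗ[k] A) : cv unitA φ = φ := by
  ext x
  rw [cv_apply _ _ (ℛ k x)]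
  have : ∀ i ∈ (ℛ k x).index, (unitA (A := A) (k := k)) ((ℛ k x).left i) * φ ((ℛ k x).right i)
      = Coalgebra.counit (R := k) ((ℛ k x).left i) • φ ((ℛ k x).right i) := by
    intro i _; simp [smul_mul_assoc]
  rw [Finset.sum_congr rfl this]
  exact counit_sum_left φ (ℛ k x)

lemma cv_unit_right (φ : H →ₗ[k] A) : cv φ unitA = φ := by
  ext x
  rw [cv_apply _ _ (ℛ k x)]
  have : ∀ i ∈ (ℛ k x).index, φ ((ℛ k x).left i) * (unitA (A := A) (k := k)) ((ℛ k x).right i)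
      = Coalgebra.counit (R := k) ((ℛ k x).right i) • φ ((ℛ k x).left i) := by
    intro i _; simp [mul_smul_comm]
  rw [Finset.sum_congr rfl this]
  exact counit_sum_right φ (ℛ k x)
lemma counit_antipode (x : H) :
    Coalgebra.counit (R := k) (𝐒 x) = Coalgebra.counit (R := k) x := by
  have h1 := counit_sum_left (Coalgebra.counit (R := k) ∘ₗ (𝐒 : H →ₗ[k] H)) (ℛ k x)
  simp only [LinearMap.coe_comp, Function.comp_apply] at h1
  rw [← h1]
  have h2 := congrArg (Coalgebra.counit (R := k)) (sum_mul_antipode_eq_smul (ℛ k x))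
  simp only [map_sum, Bialgebra.counit_mul, map_smul, Bialgebra.counit_one, smul_eq_mul,
    mul_one] at h2
  rw [← h2]
  apply Finset.sum_congr rfl
  intro i _
  simp [mul_comm]

/-- `h ↦ ∑ S h₂ ⊗ S h₁` -/
noncomputable def gS : H →ₗ[k] H ⊗[k] H :=
  (TensorProduct.comm k H H).toLinearMap ∘ₗ (TensorProduct.map 𝐒 𝐒)
    ∘ₗ (Coalgebra.comul (R := k))

lemma gS_apply {x : H} {ι : Type*} (rr : Coalgebra.Repr k x ι) :
    gS x = ∑ i ∈ rr.index, (𝐒 (rr.right i) ⊗ₜ[k] 𝐒 (rr.left i)) := by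
  rw [gS]; simp only [LinearMap.coe_comp, Function.comp_apply]
  rw [← rr.eq, map_sum, map_sum]; simp

lemma cv_comulS_comul :
    cv ((Coalgebra.comul (R := k)) ∘ₗ (𝐒 : H →ₗ[k] H)) (Coalgebra.comul (R := k))
      = (unitA (A := H ⊗[k] H) (k := k)) := by
  ext x
  rw [cv_apply _ _ (ℛ k x)]
  have : ∀ i ∈ (ℛ k x).index,
      ((Coalgebra.comul (R := k)) ∘ₗ (𝐒 : H →ₗ[k] H)) ((ℛ k x).left i) *
        (Coalgebra.comul (R := k)) ((ℛ k x).right i)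
      = Coalgebra.comul (R := k) (𝐒 ((ℛ k x).left i) * (ℛ k x).right i) := by
    intro i _; simp [Bialgebra.comul_mul]
  rw [Finset.sum_congr rfl this, ← map_sum, sum_antipode_mul_eq_smul (ℛ k x)]
  simp

lemma cv_comul_gS :
    cv (Coalgebra.comul (R := k)) (gS (H := H)) = (unitA (A := H ⊗[k] H) (k := k)) := by
  ext x
  rw [cv_apply _ _ (ℛ k x)]
  -- Step A: expand comul (left i)
  have stepA : ∀ i ∈ (ℛ k x).index,
      (Coalgebra.comul (R := k)) ((ℛ k x).left i) * gS ((ℛ k x).right i)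
      = ∑ w ∈ (ℛ k ((ℛ k x).left i)).index,
          tri3 ((TensorProduct.mk k H H).flip 1) (TensorProduct.mk k H H 1) gS
            ((ℛ k ((ℛ k x).left i)).left w) ((ℛ k ((ℛ k x).left i)).right w) ((ℛ k x).right i) := by
    intro i _
    rw [← (ℛ k ((ℛ k x).left i)).eq, Finset.sum_mul]
    apply Finset.sum_congr rfl
    intro w _
    simp [Algebra.TensorProduct.tmul_mul_tmul]
  rw [Finset.sum_congr rfl stepA]
  rw [coassoc_sum _ (ℛ k x) (fun i => ℛ k _) (fun i => ℛ k _)]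
  -- Step C: expand gS and reorganize as trilinear in the splits of (right i)
  have stepC : ∀ i ∈ (ℛ k x).index,
      ∑ q ∈ (ℛ k ((ℛ k x).right i)).index,
        tri3 ((TensorProduct.mk k H H).flip 1) (TensorProduct.mk k H H 1) gS
          ((ℛ k x).left i) ((ℛ k ((ℛ k x).right i)).left q) ((ℛ k ((ℛ k x).right i)).right q)
      = ∑ q ∈ (ℛ k ((ℛ k x).right i)).index, ∑ j ∈ (ℛ k ((ℛ k ((ℛ k x).right i)).right q)).index,
          tri3 (TensorProduct.mk k H H ((ℛ k x).left i))
            ((TensorProduct.mk k H H 1) ∘ₗ (𝐒 : H →ₗ[k] H))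
            (((TensorProduct.mk k H H).flip 1) ∘ₗ (𝐒 : H →ₗ[k] H))
          ((ℛ k ((ℛ k x).right i)).left q) ((ℛ k ((ℛ k ((ℛ k x).right i)).right q)).left j) ((ℛ k ((ℛ k ((ℛ k x).right i)).right q)).right j) := by
    intro i _
    apply Finset.sum_congr rfl
    intro q _
    simp only [tri3_apply]
    rw [gS_apply (ℛ k ((ℛ k ((ℛ k x).right i)).right q)), Finset.mul_sum]
    apply Finset.sum_congr rfl
    intro j _
    simp [Algebra.TensorProduct.tmul_mul_tmul]
  rw [Finset.sum_congr rfl stepC]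
  -- Step D: coassociativity inside (right i)
  have stepD : ∀ i ∈ (ℛ k x).index,
      (∑ q ∈ (ℛ k ((ℛ k x).right i)).index, ∑ j ∈ (ℛ k ((ℛ k ((ℛ k x).right i)).right q)).index,
          tri3 (TensorProduct.mk k H H ((ℛ k x).left i))
            ((TensorProduct.mk k H H 1) ∘ₗ (𝐒 : H →ₗ[k] H))
            (((TensorProduct.mk k H H).flip 1) ∘ₗ (𝐒 : H →ₗ[k] H))
          ((ℛ k ((ℛ k x).right i)).left q) ((ℛ k ((ℛ k ((ℛ k x).right i)).right q)).left j) ((ℛ k ((ℛ k ((ℛ k x).right i)).right q)).right j))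
      = ∑ q ∈ (ℛ k ((ℛ k x).right i)).index, ∑ j ∈ (ℛ k ((ℛ k ((ℛ k x).right i)).left q)).index,
          tri3 (TensorProduct.mk k H H ((ℛ k x).left i))
            ((TensorProduct.mk k H H 1) ∘ₗ (𝐒 : H →ₗ[k] H))
            (((TensorProduct.mk k H H).flip 1) ∘ₗ (𝐒 : H →ₗ[k] H))
          ((ℛ k ((ℛ k ((ℛ k x).right i)).left q)).left j) ((ℛ k ((ℛ k ((ℛ k x).right i)).left q)).right j) ((ℛ k ((ℛ k x).right i)).right q) := by
    intro i _
    exact (coassoc_sum _ (ℛ k ((ℛ k x).right i)) (fun q => ℛ k _) (fun q => ℛ k _)).symm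
  rw [Finset.sum_congr rfl stepD]
  -- Step E+F: collapse the inner antipode sum, then the counit sum
  have stepEF : ∀ i ∈ (ℛ k x).index,
      (∑ q ∈ (ℛ k ((ℛ k x).right i)).index, ∑ j ∈ (ℛ k ((ℛ k ((ℛ k x).right i)).left q)).index,
          tri3 (TensorProduct.mk k H H ((ℛ k x).left i))
            ((TensorProduct.mk k H H 1) ∘ₗ (𝐒 : H →ₗ[k] H))
            (((TensorProduct.mk k H H).flip 1) ∘ₗ (𝐒 : H →ₗ[k] H))
          ((ℛ k ((ℛ k ((ℛ k x).right i)).left q)).left j) ((ℛ k ((ℛ k ((ℛ k x).right i)).left q)).right j) ((ℛ k ((ℛ k x).right i)).right q))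
      = ((ℛ k x).left i * 𝐒 ((ℛ k x).right i)) ⊗ₜ[k] 1 := by
    intro i _
    have inner : ∀ q ∈ (ℛ k ((ℛ k x).right i)).index,
        ∑ j ∈ (ℛ k ((ℛ k ((ℛ k x).right i)).left q)).index,
          tri3 (TensorProduct.mk k H H ((ℛ k x).left i))
            ((TensorProduct.mk k H H 1) ∘ₗ (𝐒 : H →ₗ[k] H))
            (((TensorProduct.mk k H H).flip 1) ∘ₗ (𝐒 : H →ₗ[k] H))
          ((ℛ k ((ℛ k ((ℛ k x).right i)).left q)).left j) ((ℛ k ((ℛ k ((ℛ k x).right i)).left q)).right j) ((ℛ k ((ℛ k x).right i)).right q)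
        = Coalgebra.counit (R := k) ((ℛ k ((ℛ k x).right i)).left q) •
            (((TensorProduct.mk k H H).flip 1) ∘ₗ
              ((LinearMap.mulLeft k ((ℛ k x).left i)) ∘ₗ (𝐒 : H →ₗ[k] H)))
              ((ℛ k ((ℛ k x).right i)).right q) := by
      intro q _
      have : ∀ j ∈ (ℛ k ((ℛ k ((ℛ k x).right i)).left q)).index,
          tri3 (TensorProduct.mk k H H ((ℛ k x).left i))
            ((TensorProduct.mk k H H 1) ∘ₗ (𝐒 : H →ₗ[k] H))
            (((TensorProduct.mk k H H).flip 1) ∘ₗ (𝐒 : H →ₗ[k] H))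
          ((ℛ k ((ℛ k ((ℛ k x).right i)).left q)).left j) ((ℛ k ((ℛ k ((ℛ k x).right i)).left q)).right j) ((ℛ k ((ℛ k x).right i)).right q)
          = ((ℛ k x).left i * 𝐒 ((ℛ k ((ℛ k x).right i)).right q)) ⊗ₜ[k]
              ((ℛ k ((ℛ k ((ℛ k x).right i)).left q)).left j * 𝐒 ((ℛ k ((ℛ k ((ℛ k x).right i)).left q)).right j)) := by
        intro j _
        simp [Algebra.TensorProduct.tmul_mul_tmul]
      rw [Finset.sum_congr rfl this, ← TensorProduct.tmul_sum,
        sum_mul_antipode_eq_smul (ℛ k ((ℛ k ((ℛ k x).right i)).left q))]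
      simp [TensorProduct.tmul_smul]
    rw [Finset.sum_congr rfl inner, counit_sum_left _ (ℛ k ((ℛ k x).right i))]
    simp
  rw [Finset.sum_congr rfl stepEF, ← TensorProduct.sum_tmul,
    sum_mul_antipode_eq_smul (ℛ k x)]
  simp [Algebra.TensorProduct.one_def, TensorProduct.smul_tmul']

lemma comul_antipode_eq_gS :
    (Coalgebra.comul (R := k)) ∘ₗ (𝐒 : H →ₗ[k] H) = gS := by
  have e1 := cv_comulS_comul (k := k) (H := H)
  have e2 := cv_comul_gS (k := k) (H := H)
  calc (Coalgebra.comul (R := k)) ∘ₗ (𝐒 : H →ₗ[k] H)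
      = cv ((Coalgebra.comul (R := k)) ∘ₗ (𝐒 : H →ₗ[k] H)) unitA := (cv_unit_right _).symm
    _ = cv ((Coalgebra.comul (R := k)) ∘ₗ (𝐒 : H →ₗ[k] H))
          (cv (Coalgebra.comul (R := k)) gS) := by rw [e2]
    _ = cv (cv ((Coalgebra.comul (R := k)) ∘ₗ (𝐒 : H →ₗ[k] H)) (Coalgebra.comul (R := k))) gS :=
        (cv_assoc _ _ _).symm
    _ = cv unitA gS := by rw [e1]
    _ = gS := cv_unit_left _

lemma comul_antipode {x : H} {ι : Type*} (rr : Coalgebra.Repr k x ι) :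
    Coalgebra.comul (R := k) (𝐒 x) = ∑ i ∈ rr.index, (𝐒 (rr.right i) ⊗ₜ[k] 𝐒 (rr.left i)) := by
  have := congrFun (congrArg DFunLike.coe (comul_antipode_eq_gS (k := k) (H := H))) x
  simp only [LinearMap.coe_comp, Function.comp_apply] at this
  rw [this, gS_apply rr]

/-! ### mixed trilinear constructors -/

/-- `(a,b,c) ↦ (f b * g c) • G a` -/
noncomputable def triM1 (G : H →ₗ[k] M) (f g : H →ₗ[k] k) : H →ₗ[k] H →ₗ[k] H →ₗ[k] M :=
  LinearMap.mk₂ k (fun a b => (f b • (LinearMap.lsmul k M).flip (G a)) ∘ₗ g)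
    (by intros; ext c; simp [add_smul]) (by intros; ext c; simp [smul_smul, mul_assoc, mul_comm, mul_left_comm])
    (by intros; ext c; simp [add_smul, add_mul]) (by intros; ext c; simp [smul_smul, mul_assoc, mul_comm, mul_left_comm])

@[simp] lemma triM1_apply (G : H →ₗ[k] M) (f g : H →ₗ[k] k) (a b c : H) :
    triM1 G f g a b c = (f b * g c) • G a := by
  simp [triM1, LinearMap.lsmul_apply, smul_smul, mul_comm]

/-- `(a,b,c) ↦ (f a * g c) • G b` -/
noncomputable def triM2 (f : H →ₗ[k] k) (G : H →ₗ[k] M) (g : H →ₗ[k] k) :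
    H →ₗ[k] H →ₗ[k] H →ₗ[k] M :=
  LinearMap.mk₂ k (fun a b => (f a • (LinearMap.lsmul k M).flip (G b)) ∘ₗ g)
    (by intros; ext c; simp [add_smul, add_mul]) (by intros; ext c; simp [smul_smul, mul_assoc, mul_comm, mul_left_comm])
    (by intros; ext c; simp [add_smul]) (by intros; ext c; simp [smul_smul, mul_assoc, mul_comm, mul_left_comm])

@[simp] lemma triM2_apply (f : H →ₗ[k] k) (G : H →ₗ[k] M) (g : H →ₗ[k] k) (a b c : H) :
    triM2 f G g a b c = (f a * g c) • G b := by
  simp [triM2, LinearMap.lsmul_apply, smul_smul, mul_comm]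

/-- `(a,b,c) ↦ (f a * g b) • G c` -/
noncomputable def triM3 (f g : H →ₗ[k] k) (G : H →ₗ[k] M) : H →ₗ[k] H →ₗ[k] H →ₗ[k] M :=
  LinearMap.mk₂ k (fun a b => (f a * g b) • G)
    (by intros; simp [add_mul, add_smul]) (by intros; simp [smul_mul_assoc, smul_smul, mul_assoc, mul_comm, mul_left_comm])
    (by intros; simp [mul_add, add_smul]) (by intros; simp [mul_smul_comm, smul_smul, mul_assoc, mul_comm, mul_left_comm])

@[simp] lemma triM3_apply (f g : H →ₗ[k] k) (G : H →ₗ[k] M) (a b c : H) :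
    triM3 f g G a b c = (f a * g b) • G c := rfl

/-- `(a,b,c) ↦ f a • B b c` -/
noncomputable def sc1 (f : H →ₗ[k] k) (B : H →ₗ[k] H →ₗ[k] M) :
    H →ₗ[k] H →ₗ[k] H →ₗ[k] M := f.smulRight B

@[simp] lemma sc1_apply (f : H →ₗ[k] k) (B : H →ₗ[k] H →ₗ[k] M) (a b c : H) :
    sc1 f B a b c = f a • B b c := rfl

/-- `(a,b,c) ↦ f c • B a b` -/
noncomputable def sc3 (B : H →ₗ[k] H →ₗ[k] M) (f : H →ₗ[k] k) :
    H →ₗ[k] H →ₗ[k] H →ₗ[k] M :=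
  LinearMap.mk₂ k (fun a b => (LinearMap.lsmul k M).flip (B a b) ∘ₗ f)
    (by intros; ext c; simp) (by intros; ext c; simp)
    (by intros; ext c; simp) (by intros; ext c; simp)

@[simp] lemma sc3_apply (B : H →ₗ[k] H →ₗ[k] M) (f : H →ₗ[k] k) (a b c : H) :
    sc3 B f a b c = f c • B a b := by simp [sc3]

/-! ### the right translation map and calculus -/

noncomputable def rT (f : H →ₗ[k] k) : H →ₗ[k] H :=
  (TensorProduct.rid k H).toLinearMap ∘ₗ (LinearMap.lTensor H f) ∘ₗ (Coalgebra.comul (R := k))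

lemma lT_apply (f : H →ₗ[k] k) {x : H} {ι : Type*} (rr : Coalgebra.Repr k x ι) :
    lT f x = ∑ i ∈ rr.index, f (rr.left i) • rr.right i := by
  rw [lT]; simp only [LinearMap.coe_comp, Function.comp_apply]
  rw [← rr.eq, map_sum, map_sum]; simp

lemma rT_apply (f : H →ₗ[k] k) {x : H} {ι : Type*} (rr : Coalgebra.Repr k x ι) :
    rT f x = ∑ i ∈ rr.index, f (rr.right i) • rr.left i := by
  rw [rT]; simp only [LinearMap.coe_comp, Function.comp_apply]
  rw [← rr.eq, map_sum, map_sum]; simp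

lemma conv_eq_cv (f g : H →ₗ[k] k) : conv f g = cv f g := rfl

lemma conv_apply (f g : H →ₗ[k] k) {x : H} {ι : Type*} (rr : Coalgebra.Repr k x ι) :
    conv f g x = ∑ i ∈ rr.index, f (rr.left i) * g (rr.right i) := by
  rw [conv_eq_cv, cv_apply _ _ rr]

lemma unitA_eq_counit : (unitA (A := k) (k := k) (H := H)) = Coalgebra.counit (R := k) := by
  ext x; simp [unitA]

lemma conv_assoc (f g e : H →ₗ[k] k) : conv (conv f g) e = conv f (conv g e) := by
  simp only [conv_eq_cv]; exact cv_assoc f g e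

lemma conv_counit_left (f : H →ₗ[k] k) : conv (Coalgebra.counit (R := k)) f = f := by
  rw [conv_eq_cv, ← unitA_eq_counit]; exact cv_unit_left f

lemma conv_counit_right (f : H →ₗ[k] k) : conv f (Coalgebra.counit (R := k)) = f := by
  rw [conv_eq_cv, ← unitA_eq_counit]; exact cv_unit_right f

lemma sw3_apply (f : H →ₗ[k] k) (g : H →ₗ[k] H) (p : H →ₗ[k] k) {x : H}
    {ι : Type*} (rr : Coalgebra.Repr k x ι) {κ : Type*} (rL : ∀ i, Coalgebra.Repr k (rr.left i) κ) :
    sw3 f g p x = ∑ i ∈ rr.index, ∑ j ∈ (rL i).index,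
      (f ((rL i).left j) * p (rr.right i)) • g ((rL i).right j) := by
  rw [sw3]; simp only [LinearMap.coe_comp, Function.comp_apply]
  rw [← rr.eq]
  simp only [map_sum]
  apply Finset.sum_congr rfl
  intro i _
  rw [LinearMap.rTensor_tmul, ← (rL i).eq, TensorProduct.sum_tmul]
  simp only [map_sum]
  apply Finset.sum_congr rfl
  intro j _
  simp [TensorProduct.smul_tmul', mul_comm, smul_smul]

lemma chiMap_apply (Sinv : H →ₗ[k] H) (f : H →ₗ[k] k) {x : H} {ι : Type*} (rr : Coalgebra.Repr k x ι) :
    chiMap Sinv f x = ∑ i ∈ rr.index, f (rr.right i) • Sinv (Sinv (rr.left i)) := by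
  rw [chiMap]; simp only [LinearMap.coe_comp, Function.comp_apply]
  rw [← rr.eq, map_sum, map_sum]; simp

lemma lT_comp (f g : H →ₗ[k] k) : lT f ∘ₗ lT g = lT (conv g f) := by
  ext x
  simp only [LinearMap.coe_comp, Function.comp_apply]
  rw [lT_apply g (ℛ k x), map_sum]
  have step : ∀ i ∈ (ℛ k x).index,
      lT f (g ((ℛ k x).left i) • (ℛ k x).right i)
      = ∑ j ∈ (ℛ k ((ℛ k x).right i)).index,
          triM3 g f LinearMap.id ((ℛ k x).left i)
            ((ℛ k ((ℛ k x).right i)).left j) ((ℛ k ((ℛ k x).right i)).right j) := by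
    intro i _
    rw [map_smul, lT_apply f (ℛ k ((ℛ k x).right i)), Finset.smul_sum]
    apply Finset.sum_congr rfl
    intro j _
    simp [smul_smul]
  rw [Finset.sum_congr rfl step,
    ← coassoc_sum (triM3 g f LinearMap.id) (ℛ k x) (fun i => ℛ k _) (fun i => ℛ k _)]
  rw [lT_apply (conv g f) (ℛ k x)]
  apply Finset.sum_congr rfl
  intro i _
  rw [conv_apply g f (ℛ k ((ℛ k x).left i)), Finset.sum_smul]
  simp

lemma rT_comp (f g : H →ₗ[k] k) : rT f ∘ₗ rT g = rT (conv f g) := by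
  ext x
  simp only [LinearMap.coe_comp, Function.comp_apply]
  rw [rT_apply g (ℛ k x), map_sum]
  have step : ∀ i ∈ (ℛ k x).index,
      rT f (g ((ℛ k x).right i) • (ℛ k x).left i)
      = ∑ j ∈ (ℛ k ((ℛ k x).left i)).index,
          triM1 LinearMap.id f g ((ℛ k ((ℛ k x).left i)).left j)
            ((ℛ k ((ℛ k x).left i)).right j) ((ℛ k x).right i) := by
    intro i _
    rw [map_smul, rT_apply f (ℛ k ((ℛ k x).left i)), Finset.smul_sum]
    apply Finset.sum_congr rfl
    intro j _
    simp [smul_smul, mul_comm]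
  rw [Finset.sum_congr rfl step,
    coassoc_sum (triM1 LinearMap.id f g) (ℛ k x) (fun i => ℛ k _) (fun i => ℛ k _)]
  rw [rT_apply (conv f g) (ℛ k x)]
  apply Finset.sum_congr rfl
  intro i _
  rw [conv_apply f g (ℛ k ((ℛ k x).right i)), Finset.sum_smul]
  simp

lemma lT_comp_rT (f p : H →ₗ[k] k) : lT f ∘ₗ rT p = sw3 f LinearMap.id p := by
  ext x
  simp only [LinearMap.coe_comp, Function.comp_apply]
  rw [rT_apply p (ℛ k x), map_sum, sw3_apply f LinearMap.id p (ℛ k x) (fun i => ℛ k _)]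
  apply Finset.sum_congr rfl
  intro i _
  rw [map_smul, lT_apply f (ℛ k ((ℛ k x).left i)), Finset.smul_sum]
  apply Finset.sum_congr rfl
  intro j _
  simp [smul_smul, mul_comm]

lemma rT_comp_lT (f p : H →ₗ[k] k) : rT p ∘ₗ lT f = sw3 f LinearMap.id p := by
  ext x
  simp only [LinearMap.coe_comp, Function.comp_apply]
  rw [lT_apply f (ℛ k x), map_sum]
  have step : ∀ i ∈ (ℛ k x).index,
      rT p (f ((ℛ k x).left i) • (ℛ k x).right i)
      = ∑ j ∈ (ℛ k ((ℛ k x).right i)).index,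
          triM2 f LinearMap.id p ((ℛ k x).left i)
            ((ℛ k ((ℛ k x).right i)).left j) ((ℛ k ((ℛ k x).right i)).right j) := by
    intro i _
    rw [map_smul, rT_apply p (ℛ k ((ℛ k x).right i)), Finset.smul_sum]
    apply Finset.sum_congr rfl
    intro j _
    simp [smul_smul]
  rw [Finset.sum_congr rfl step,
    ← coassoc_sum (triM2 f LinearMap.id p) (ℛ k x) (fun i => ℛ k _) (fun i => ℛ k _)]
  rw [sw3_apply f LinearMap.id p (ℛ k x) (fun i => ℛ k _)]
  apply Finset.sum_congr rfl
  intro i _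
  apply Finset.sum_congr rfl
  intro j _
  simp

lemma lT_counit : lT (Coalgebra.counit (R := k)) = (LinearMap.id : H →ₗ[k] H) := by
  ext x
  rw [lT_apply _ (ℛ k x)]
  simpa using counit_sum_left LinearMap.id (ℛ k x)

lemma rT_counit : rT (Coalgebra.counit (R := k)) = (LinearMap.id : H →ₗ[k] H) := by
  ext x
  rw [rT_apply _ (ℛ k x)]
  simpa using counit_sum_right LinearMap.id (ℛ k x)

lemma counit_comp_lT (f : H →ₗ[k] k) : (Coalgebra.counit (R := k)) ∘ₗ lT f = f := by
  ext x
  simp only [LinearMap.coe_comp, Function.comp_apply]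
  rw [lT_apply f (ℛ k x), map_sum]
  have : ∀ i ∈ (ℛ k x).index,
      Coalgebra.counit (R := k) (f ((ℛ k x).left i) • (ℛ k x).right i)
      = Coalgebra.counit (R := k) ((ℛ k x).right i) • f ((ℛ k x).left i) := by
    intro i _; simp [smul_eq_mul, mul_comm]
  rw [Finset.sum_congr rfl this]
  exact counit_sum_right f (ℛ k x)
/-! ### S⁻¹ and integral lemmas -/

lemma counit_Sinv (Sinv : H →ₗ[k] H) (hr : ∀ h : H, 𝐒 (Sinv h) = h) (x : H) :
    Coalgebra.counit (R := k) (Sinv x) = Coalgebra.counit (R := k) x := by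
  conv_rhs => rw [← hr x, _root_.counit_antipode]

/-- bilinear `(u,v) ↦ Sinv v * u` -/
noncomputable def mSinv (Sinv : H →ₗ[k] H) : H →ₗ[k] H →ₗ[k] H :=
  LinearMap.mk₂ k (fun u v => Sinv v * u)
    (by intros; simp [mul_add]) (by intros; simp [mul_smul_comm])
    (by intros; simp [map_add, add_mul]) (by intros; simp [map_smul, smul_mul_assoc])

@[simp] lemma mSinv_apply (Sinv : H →ₗ[k] H) (u v : H) : mSinv Sinv u v = Sinv v * u := rfl

/-- `∑ S⁻¹(x₂) x₁ = ε(x) 1` -/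
lemma sinv_mul_sum (Sinv : H →ₗ[k] H) (hl : ∀ h : H, Sinv (𝐒 h) = h)
    (hr : ∀ h : H, 𝐒 (Sinv h) = h) {x : H} {ι : Type*} (rr : Coalgebra.Repr k x ι) :
    ∑ i ∈ rr.index, Sinv (rr.right i) * rr.left i
      = Coalgebra.counit (R := k) x • (1 : H) := by
  have e1 : ∑ i ∈ rr.index, Sinv (rr.right i) * rr.left i
      = ∑ i ∈ rr.index, mSinv Sinv (rr.left i) (rr.right i) := by simp
  have e2 := repr_sum (mSinv Sinv) rr
  have key : Coalgebra.comul (R := k) x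
      = ∑ p ∈ (ℛ k (Sinv x)).index,
          (𝐒 ((ℛ k (Sinv x)).right p) ⊗ₜ[k] 𝐒 ((ℛ k (Sinv x)).left p)) := by
    conv_lhs => rw [← hr x]
    exact comul_antipode (ℛ k (Sinv x))
  rw [e1, e2, key, map_sum]
  have e3 : ∀ p ∈ (ℛ k (Sinv x)).index,
      TensorProduct.lift (mSinv Sinv)
          (𝐒 ((ℛ k (Sinv x)).right p) ⊗ₜ[k] 𝐒 ((ℛ k (Sinv x)).left p))
      = (ℛ k (Sinv x)).left p * 𝐒 ((ℛ k (Sinv x)).right p) := by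
    intro p _; simp [hl]
  rw [Finset.sum_congr rfl e3, sum_mul_antipode_eq_smul (ℛ k (Sinv x)),
    counit_Sinv Sinv hr x]

/-- bilinear `(b,c) ↦ T (Sinv c * (b * z))` -/
noncomputable def bT (T : H →ₗ[k] k) (Sinv : H →ₗ[k] H) (z : H) : H →ₗ[k] H →ₗ[k] k :=
  LinearMap.mk₂ k (fun b c => T (Sinv c * (b * z)))
    (by intros; simp [add_mul, mul_add]) (by intros; simp [smul_mul_assoc, mul_smul_comm])
    (by intros; simp [map_add, add_mul, mul_add])
    (by intros; simp [map_smul, smul_mul_assoc, mul_smul_comm])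

@[simp] lemma bT_apply (T : H →ₗ[k] k) (Sinv : H →ₗ[k] H) (z : H) (b c : H) :
    bT T Sinv z b c = T (Sinv c * (b * z)) := rfl

/-- bilinear `(a,b) ↦ R (𝐒 a * (b * z))` -/
noncomputable def bR (R : H →ₗ[k] k) (z : H) : H →ₗ[k] H →ₗ[k] k :=
  LinearMap.mk₂ k (fun a b => R (𝐒 a * (b * z)))
    (by intros; simp [map_add, add_mul]) (by intros; simp [map_smul, smul_mul_assoc])
    (by intros; simp [mul_add, add_mul]) (by intros; simp [smul_mul_assoc, mul_smul_comm])

@[simp] lemma bR_apply (R : H →ₗ[k] k) (z : H) (a b : H) :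
    bR R z a b = R (𝐒 a * (b * z)) := rfl


lemma mulRepr_sum {N : Type*} [AddCommMonoid N] {x y : H}
    {ι κ : Type*} (rx : Coalgebra.Repr k x ι) (ry : Coalgebra.Repr k y κ) (F : H → H → N) :
    ∑ p ∈ (mulRepr rx ry).index, F ((mulRepr rx ry).left p) ((mulRepr rx ry).right p)
    = ∑ w ∈ rx.index, ∑ q ∈ ry.index,
        F (rx.left w * ry.left q) (rx.right w * ry.right q) := by
  show ∑ p ∈ rx.index ×ˢ ry.index,
      F (rx.left p.1 * ry.left p.2) (rx.right p.1 * ry.right p.2) = _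
  rw [Finset.sum_product]

section Lam
variable (lam : H →ₗ[k] k) (a : H) (Sinv : H →ₗ[k] H)

lemma F1 (hlam_int : ∀ f : H →ₗ[k] k, conv f lam = f 1 • lam) (x : H) :
    rT lam x = lam x • (1 : H) := by
  have key : ∀ φ : Module.Dual k H, φ (rT lam x - lam x • (1 : H)) = 0 := by
    intro φ
    have h1 : φ (rT lam x) = conv φ lam x := by
      rw [rT_apply lam (ℛ k x), map_sum, conv_apply φ lam (ℛ k x)]
      apply Finset.sum_congr rfl
      intro i _
      simp [mul_comm]
    have h2 := congrFun (congrArg DFunLike.coe (hlam_int φ)) x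
    simp only [LinearMap.smul_apply, smul_eq_mul] at h2
    simp [h1, h2, mul_comm]
  have := (Module.forall_dual_apply_eq_zero_iff k (rT lam x - lam x • (1 : H))).mp key
  rwa [sub_eq_zero] at this

lemma F1_sum (hlam_int : ∀ f : H →ₗ[k] k, conv f lam = f 1 • lam) {x : H}
    {ι : Type*} (rr : Coalgebra.Repr k x ι) :
    ∑ i ∈ rr.index, lam (rr.right i) • rr.left i = lam x • (1 : H) := by
  rw [← rT_apply lam rr]; exact F1 lam hlam_int x

lemma F3_sum (ha_mod : ∀ h : H, lT lam h = lam h • (𝐒 a)) {x : H}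
    {ι : Type*} (rr : Coalgebra.Repr k x ι) :
    ∑ i ∈ rr.index, lam (rr.left i) • rr.right i = lam x • (𝐒 a) := by
  rw [← lT_apply lam rr]; exact ha_mod x

/-- Lemma (D) -/
lemma lemD (hl : ∀ h : H, Sinv (𝐒 h) = h) (hr : ∀ h : H, 𝐒 (Sinv h) = h)
    (ha_mod : ∀ h : H, lT lam h = lam h • (𝐒 a))
    (x l : H) (T : H →ₗ[k] k) :
    ∑ q ∈ (ℛ k l).index, lam (x * (ℛ k l).left q) * T ((ℛ k l).right q)
    = ∑ s ∈ (ℛ k x).index,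
        lam ((ℛ k x).left s * l) * T (Sinv ((ℛ k x).right s) * 𝐒 a) := by
  symm
  have step1 : ∀ s ∈ (ℛ k x).index,
      lam ((ℛ k x).left s * l) * T (Sinv ((ℛ k x).right s) * 𝐒 a)
      = ∑ w ∈ (ℛ k ((ℛ k x).left s)).index,
          (∑ q ∈ (ℛ k l).index,
            sc1 (lam ∘ₗ LinearMap.mulRight k ((ℛ k l).left q))
              (bT T Sinv ((ℛ k l).right q)))
          ((ℛ k ((ℛ k x).left s)).left w)
          ((ℛ k ((ℛ k x).left s)).right w) ((ℛ k x).right s) := by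
    intro s _
    have hF3 := F3_sum lam a ha_mod (mulRepr (ℛ k ((ℛ k x).left s)) (ℛ k l))
    have key := congrArg (T ∘ₗ LinearMap.mulLeft k (Sinv ((ℛ k x).right s))) hF3
    simp only [map_sum, map_smul, LinearMap.coe_comp, Function.comp_apply,
      LinearMap.mulLeft_apply, smul_eq_mul] at key
    rw [← key,
      mulRepr_sum (ℛ k ((ℛ k x).left s)) (ℛ k l)
        (fun u v => lam u * T (Sinv ((ℛ k x).right s) * v))]
    simp only [mulRepr_left, mulRepr_right, LinearMap.sum_apply, sc1_apply, bT_apply,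
      LinearMap.coe_comp, Function.comp_apply, LinearMap.mulRight_apply, smul_eq_mul]
  rw [Finset.sum_congr rfl step1]
  rw [coassoc_sum _ (ℛ k x) (fun s => ℛ k ((ℛ k x).left s)) (fun s => ℛ k ((ℛ k x).right s))]
  have step2 : ∀ s ∈ (ℛ k x).index,
      ∑ w ∈ (ℛ k ((ℛ k x).right s)).index,
        (∑ q ∈ (ℛ k l).index,
          sc1 (lam ∘ₗ LinearMap.mulRight k ((ℛ k l).left q))
            (bT T Sinv ((ℛ k l).right q)))
        ((ℛ k x).left s) ((ℛ k ((ℛ k x).right s)).left w) ((ℛ k ((ℛ k x).right s)).right w)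
      = ∑ q ∈ (ℛ k l).index,
          lam ((ℛ k x).left s * (ℛ k l).left q) *
            (Coalgebra.counit (R := k) ((ℛ k x).right s) * T ((ℛ k l).right q)) := by
    intro s _
    simp only [LinearMap.sum_apply, sc1_apply, bT_apply, LinearMap.coe_comp,
      Function.comp_apply, LinearMap.mulRight_apply, smul_eq_mul]
    rw [Finset.sum_comm]
    apply Finset.sum_congr rfl; intro q _
    rw [← Finset.mul_sum]
    congr 1
    have key := congrArg (T ∘ₗ LinearMap.mulRight k ((ℛ k l).right q))
      (sinv_mul_sum Sinv hl hr (ℛ k ((ℛ k x).right s)))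
    simp only [map_sum, map_smul, LinearMap.coe_comp, Function.comp_apply,
      LinearMap.mulRight_apply, smul_eq_mul, one_mul] at key
    rw [← key]
    apply Finset.sum_congr rfl; intro w _
    rw [mul_assoc]
  rw [Finset.sum_congr rfl step2, Finset.sum_comm]
  apply Finset.sum_congr rfl; intro q _
  have key := counit_sum_right (lam ∘ₗ LinearMap.mulRight k ((ℛ k l).left q)) (ℛ k x)
  simp only [LinearMap.coe_comp, Function.comp_apply, LinearMap.mulRight_apply,
    smul_eq_mul] at key
  calc ∑ s ∈ (ℛ k x).index,
        lam ((ℛ k x).left s * (ℛ k l).left q) *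
          (Coalgebra.counit (R := k) ((ℛ k x).right s) * T ((ℛ k l).right q))
      = (∑ s ∈ (ℛ k x).index,
          Coalgebra.counit (R := k) ((ℛ k x).right s) *
            lam ((ℛ k x).left s * (ℛ k l).left q)) * T ((ℛ k l).right q) := by
        rw [Finset.sum_mul]
        apply Finset.sum_congr rfl; intro s _; ring
    _ = lam (x * (ℛ k l).left q) * T ((ℛ k l).right q) := by rw [key]

/-- Lemma (F') -/
lemma lemFp (hlam_int : ∀ f : H →ₗ[k] k, conv f lam = f 1 • lam)
    (y l : H) (R : H →ₗ[k] k) :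
    ∑ p ∈ (ℛ k l).index, R ((ℛ k l).left p) * lam (y * (ℛ k l).right p)
    = ∑ t ∈ (ℛ k y).index, R (𝐒 ((ℛ k y).left t)) * lam ((ℛ k y).right t * l) := by
  symm
  have step1 : ∀ t ∈ (ℛ k y).index,
      R (𝐒 ((ℛ k y).left t)) * lam ((ℛ k y).right t * l)
      = ∑ w ∈ (ℛ k ((ℛ k y).right t)).index,
          (∑ q ∈ (ℛ k l).index,
            sc3 (bR R ((ℛ k l).left q)) (lam ∘ₗ LinearMap.mulRight k ((ℛ k l).right q)))
          ((ℛ k y).left t)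
          ((ℛ k ((ℛ k y).right t)).left w) ((ℛ k ((ℛ k y).right t)).right w) := by
    intro t _
    have hF1 := F1_sum lam hlam_int (mulRepr (ℛ k ((ℛ k y).right t)) (ℛ k l))
    have key := congrArg (R ∘ₗ LinearMap.mulLeft k (𝐒 ((ℛ k y).left t))) hF1
    simp only [map_sum, map_smul, LinearMap.coe_comp, Function.comp_apply,
      LinearMap.mulLeft_apply, smul_eq_mul, mul_one] at key
    rw [mul_comm, ← key,
      mulRepr_sum (ℛ k ((ℛ k y).right t)) (ℛ k l)
        (fun u v => lam v * R (𝐒 ((ℛ k y).left t) * u))]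
    simp only [mulRepr_left, mulRepr_right, LinearMap.sum_apply, sc3_apply, bR_apply,
      LinearMap.coe_comp, Function.comp_apply, LinearMap.mulRight_apply, smul_eq_mul]
  rw [Finset.sum_congr rfl step1]
  rw [← coassoc_sum _ (ℛ k y) (fun t => ℛ k ((ℛ k y).left t)) (fun t => ℛ k ((ℛ k y).right t))]
  have step2 : ∀ t ∈ (ℛ k y).index,
      ∑ w ∈ (ℛ k ((ℛ k y).left t)).index,
        (∑ q ∈ (ℛ k l).index,
          sc3 (bR R ((ℛ k l).left q)) (lam ∘ₗ LinearMap.mulRight k ((ℛ k l).right q)))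
        ((ℛ k ((ℛ k y).left t)).left w) ((ℛ k ((ℛ k y).left t)).right w) ((ℛ k y).right t)
      = ∑ q ∈ (ℛ k l).index,
          Coalgebra.counit (R := k) ((ℛ k y).left t) *
            (R ((ℛ k l).left q) * lam ((ℛ k y).right t * (ℛ k l).right q)) := by
    intro t _
    simp only [LinearMap.sum_apply, sc3_apply, bR_apply, LinearMap.coe_comp,
      Function.comp_apply, LinearMap.mulRight_apply, smul_eq_mul]
    rw [Finset.sum_comm]
    apply Finset.sum_congr rfl; intro q _
    have key := congrArg (R ∘ₗ LinearMap.mulRight k ((ℛ k l).left q))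
      (sum_antipode_mul_eq_smul (ℛ k ((ℛ k y).left t)))
    simp only [map_sum, map_smul, LinearMap.coe_comp, Function.comp_apply,
      LinearMap.mulRight_apply, smul_eq_mul, one_mul] at key
    calc ∑ w ∈ (ℛ k ((ℛ k y).left t)).index,
          lam ((ℛ k y).right t * (ℛ k l).right q) *
            R (𝐒 ((ℛ k ((ℛ k y).left t)).left w) *
              ((ℛ k ((ℛ k y).left t)).right w * (ℛ k l).left q))
        = lam ((ℛ k y).right t * (ℛ k l).right q) *
            (∑ w ∈ (ℛ k ((ℛ k y).left t)).index,
              R (𝐒 ((ℛ k ((ℛ k y).left t)).left w) * (ℛ k ((ℛ k y).left t)).right w *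
                (ℛ k l).left q)) := by
          rw [Finset.mul_sum]
          apply Finset.sum_congr rfl; intro w _
          rw [mul_assoc]
      _ = Coalgebra.counit (R := k) ((ℛ k y).left t) *
            (R ((ℛ k l).left q) * lam ((ℛ k y).right t * (ℛ k l).right q)) := by
          rw [key]; ring
  rw [Finset.sum_congr rfl step2, Finset.sum_comm]
  apply Finset.sum_congr rfl; intro q _
  have key := counit_sum_left (lam ∘ₗ LinearMap.mulRight k ((ℛ k l).right q)) (ℛ k y)
  simp only [LinearMap.coe_comp, Function.comp_apply, LinearMap.mulRight_apply,
    smul_eq_mul] at key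
  calc ∑ t ∈ (ℛ k y).index,
        Coalgebra.counit (R := k) ((ℛ k y).left t) *
          (R ((ℛ k l).left q) * lam ((ℛ k y).right t * (ℛ k l).right q))
      = R ((ℛ k l).left q) *
          (∑ t ∈ (ℛ k y).index, Coalgebra.counit (R := k) ((ℛ k y).left t) *
            lam ((ℛ k y).right t * (ℛ k l).right q)) := by
        rw [Finset.mul_sum]
        apply Finset.sum_congr rfl; intro t _; ring
    _ = R ((ℛ k l).left q) * lam (y * (ℛ k l).right q) := by rw [key]
end Lam
/-! ### evaluation of trip, vF; helpers for the main computation -/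

lemma sum_comm_dep {I P N : Type*} [AddCommMonoid N] {JI : I → Type*} {QP : P → Type*}
    (s : Finset I) (T : ∀ i, Finset (JI i)) (u : Finset P) (V : ∀ p, Finset (QP p))
    (f : ∀ i, JI i → ∀ p, QP p → N) :
    ∑ i ∈ s, ∑ j ∈ T i, ∑ p ∈ u, ∑ q ∈ V p, f i j p q
    = ∑ p ∈ u, ∑ q ∈ V p, ∑ i ∈ s, ∑ j ∈ T i, f i j p q := by
  calc ∑ i ∈ s, ∑ j ∈ T i, ∑ p ∈ u, ∑ q ∈ V p, f i j p q
      = ∑ i ∈ s, ∑ p ∈ u, ∑ j ∈ T i, ∑ q ∈ V p, f i j p q :=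
        Finset.sum_congr rfl (fun i _ => Finset.sum_comm)
    _ = ∑ p ∈ u, ∑ i ∈ s, ∑ j ∈ T i, ∑ q ∈ V p, f i j p q := Finset.sum_comm
    _ = ∑ p ∈ u, ∑ i ∈ s, ∑ q ∈ V p, ∑ j ∈ T i, f i j p q :=
        Finset.sum_congr rfl (fun p _ => Finset.sum_congr rfl (fun i _ => Finset.sum_comm))
    _ = ∑ p ∈ u, ∑ q ∈ V p, ∑ i ∈ s, ∑ j ∈ T i, f i j p q :=
        Finset.sum_congr rfl (fun p _ => Finset.sum_comm)

/-- `cw2` as a linear map -/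
noncomputable def cw2L : (H →ₗ[k] H →ₗ[k] M) →ₗ[k] H →ₗ[k] M :=
  ((LinearMap.llcomp k H (H ⊗[k] H) M).flip (Coalgebra.comul (R := k))) ∘ₗ
    (TensorProduct.lift.equiv (RingHom.id k) H H M).toLinearMap

lemma cw2L_eq (Ψ : H →ₗ[k] H →ₗ[k] M) : cw2L Ψ = cw2 Ψ := by
  have e : (TensorProduct.uncurry (RingHom.id k) H H M) Ψ = TensorProduct.lift Ψ := by
    ext m n; simp [TensorProduct.uncurry_apply]
  ext x
  simp [cw2L, cw2, TensorProduct.lift.equiv, e]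

lemma vF_apply (σ : (H ⊗[k] H) →ₗ[k] k) {x : H} {ι : Type*} (rr : Coalgebra.Repr k x ι) :
    vF σ x = ∑ i ∈ rr.index, σ (rr.left i ⊗ₜ[k] 𝐒 (rr.right i)) := by
  rw [vF]; simp only [LinearMap.coe_comp, Function.comp_apply]
  rw [← rr.eq, map_sum, map_sum]; simp

/-- `θ(m) = ∑ τ(m₂ ⊗ S⁻¹(m₁) a⁻¹)` -/
noncomputable def thMap (τ : (H ⊗[k] H) →ₗ[k] k) (Sinv : H →ₗ[k] H) (a : H) : H →ₗ[k] k :=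
  cw2 (LinearMap.mk₂ k (fun u v => τ (v ⊗ₜ[k] (Sinv u * 𝐒 a)))
    (by intros; simp [map_add, add_mul, TensorProduct.tmul_add])
    (by intros; simp [map_smul, smul_mul_assoc, TensorProduct.tmul_smul])
    (by intros; simp [TensorProduct.add_tmul])
    (by intros; rw [← TensorProduct.smul_tmul', map_smul, smul_eq_mul]))

lemma thMap_apply (τ : (H ⊗[k] H) →ₗ[k] k) (Sinv : H →ₗ[k] H) (a : H) {x : H}
    {ι : Type*} (rr : Coalgebra.Repr k x ι) :
    thMap τ Sinv a x
      = ∑ i ∈ rr.index, τ (rr.right i ⊗ₜ[k] (Sinv (rr.left i) * 𝐒 a)) := by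
  rw [thMap, cw2_apply _ rr]
  simp

lemma trip_eval (lam : H →ₗ[k] k) (ρ τ : (H ⊗[k] H) →ₗ[k] k) (h l : H) :
    trip lam ρ τ (h ⊗ₜ[k] l)
    = ∑ i ∈ (ℛ k h).index, ∑ j ∈ (ℛ k ((ℛ k h).left i)).index,
      ∑ p ∈ (ℛ k l).index, ∑ q ∈ (ℛ k ((ℛ k l).left p)).index,
        ρ ((ℛ k ((ℛ k h).left i)).left j ⊗ₜ[k] (ℛ k ((ℛ k l).left p)).left q) *
        lam ((ℛ k ((ℛ k h).left i)).right j * (ℛ k ((ℛ k l).left p)).right q) *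
        τ ((ℛ k h).right i ⊗ₜ[k] (ℛ k l).right p) := by
  have Dh : (Coalgebra.comul (R := k)).rTensor H ((Coalgebra.comul (R := k)) h)
      = ∑ i ∈ (ℛ k h).index, ∑ j ∈ (ℛ k ((ℛ k h).left i)).index,
          ((ℛ k ((ℛ k h).left i)).left j ⊗ₜ[k] (ℛ k ((ℛ k h).left i)).right j)
            ⊗ₜ[k] (ℛ k h).right i := by
    rw [← (ℛ k h).eq, map_sum]
    apply Finset.sum_congr rfl; intro i _
    rw [LinearMap.rTensor_tmul, ← (ℛ k ((ℛ k h).left i)).eq, TensorProduct.sum_tmul]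
  have Dl : (Coalgebra.comul (R := k)).rTensor H ((Coalgebra.comul (R := k)) l)
      = ∑ p ∈ (ℛ k l).index, ∑ q ∈ (ℛ k ((ℛ k l).left p)).index,
          ((ℛ k ((ℛ k l).left p)).left q ⊗ₜ[k] (ℛ k ((ℛ k l).left p)).right q)
            ⊗ₜ[k] (ℛ k l).right p := by
    rw [← (ℛ k l).eq, map_sum]
    apply Finset.sum_congr rfl; intro p _
    rw [LinearMap.rTensor_tmul, ← (ℛ k ((ℛ k l).left p)).eq, TensorProduct.sum_tmul]
  rw [trip]
  simp only [LinearMap.coe_comp, Function.comp_apply, TensorProduct.map_tmul]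
  rw [Dh, Dl]
  simp only [TensorProduct.sum_tmul, TensorProduct.tmul_sum, map_sum]
  conv_rhs => rw [sum_comm_dep (ℛ k h).index (fun i => (ℛ k ((ℛ k h).left i)).index)
    (ℛ k l).index (fun p => (ℛ k ((ℛ k l).left p)).index)]
  apply Finset.sum_congr rfl; intro p _
  apply Finset.sum_congr rfl; intro q _
  apply Finset.sum_congr rfl; intro i _
  apply Finset.sum_congr rfl; intro j _
  simp only [TensorProduct.tensorTensorTensorComm_tmul, LinearMap.rTensor_tmul,
    LinearEquiv.coe_coe, TensorProduct.map_tmul, LinearMap.mul'_apply, LinearMap.coe_comp,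
    Function.comp_apply, TensorProduct.comm_tmul]
section Lam2
variable (lam : H →ₗ[k] k) (a : H) (Sinv : H →ₗ[k] H)

/-- Combined lemma (DF). -/
lemma lemDF (hl : ∀ h : H, Sinv (𝐒 h) = h) (hr : ∀ h : H, 𝐒 (Sinv h) = h)
    (hlam_int : ∀ f : H →ₗ[k] k, conv f lam = f 1 • lam)
    (ha_mod : ∀ h : H, lT lam h = lam h • (𝐒 a))
    (x l : H) (R T : H →ₗ[k] k) :
    ∑ p ∈ (ℛ k l).index, ∑ q ∈ (ℛ k ((ℛ k l).right p)).index,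
      R ((ℛ k l).left p) * lam (x * (ℛ k ((ℛ k l).right p)).left q)
        * T ((ℛ k ((ℛ k l).right p)).right q)
    = ∑ s ∈ (ℛ k x).index, ∑ t ∈ (ℛ k ((ℛ k x).left s)).index,
        R (𝐒 ((ℛ k ((ℛ k x).left s)).left t)) * lam ((ℛ k ((ℛ k x).left s)).right t * l)
          * T (Sinv ((ℛ k x).right s) * 𝐒 a) := by
  have step1 : ∀ p ∈ (ℛ k l).index,
      ∑ q ∈ (ℛ k ((ℛ k l).right p)).index,
        R ((ℛ k l).left p) * lam (x * (ℛ k ((ℛ k l).right p)).left q)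
          * T ((ℛ k ((ℛ k l).right p)).right q)
      = ∑ s ∈ (ℛ k x).index,
          R ((ℛ k l).left p) *
            (lam ((ℛ k x).left s * (ℛ k l).right p) * T (Sinv ((ℛ k x).right s) * 𝐒 a)) := by
    intro p _
    calc ∑ q ∈ (ℛ k ((ℛ k l).right p)).index,
          R ((ℛ k l).left p) * lam (x * (ℛ k ((ℛ k l).right p)).left q)
            * T ((ℛ k ((ℛ k l).right p)).right q)
        = R ((ℛ k l).left p) * ∑ q ∈ (ℛ k ((ℛ k l).right p)).index,
            lam (x * (ℛ k ((ℛ k l).right p)).left q)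
              * T ((ℛ k ((ℛ k l).right p)).right q) := by
          rw [Finset.mul_sum]
          exact Finset.sum_congr rfl (fun q _ => by ring)
      _ = R ((ℛ k l).left p) * ∑ s ∈ (ℛ k x).index,
            lam ((ℛ k x).left s * (ℛ k l).right p) *
              T (Sinv ((ℛ k x).right s) * 𝐒 a) := by
          rw [lemD lam a Sinv hl hr ha_mod x ((ℛ k l).right p) T]
      _ = ∑ s ∈ (ℛ k x).index,
            R ((ℛ k l).left p) *
              (lam ((ℛ k x).left s * (ℛ k l).right p) *
                T (Sinv ((ℛ k x).right s) * 𝐒 a)) := by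
          rw [Finset.mul_sum]
  rw [Finset.sum_congr rfl step1, Finset.sum_comm]
  apply Finset.sum_congr rfl; intro s _
  have step2 : ∑ p ∈ (ℛ k l).index,
      R ((ℛ k l).left p) *
        (lam ((ℛ k x).left s * (ℛ k l).right p) * T (Sinv ((ℛ k x).right s) * 𝐒 a))
      = (∑ p ∈ (ℛ k l).index,
          R ((ℛ k l).left p) * lam ((ℛ k x).left s * (ℛ k l).right p)) *
            T (Sinv ((ℛ k x).right s) * 𝐒 a) := by
    rw [Finset.sum_mul]
    apply Finset.sum_congr rfl; intro p _; ring
  rw [step2, lemFp lam hlam_int ((ℛ k x).left s) l R, Finset.sum_mul]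

/-- The master identity (G). -/
lemma lemG (hl : ∀ h : H, Sinv (𝐒 h) = h) (hr : ∀ h : H, 𝐒 (Sinv h) = h)
    (hlam_int : ∀ f : H →ₗ[k] k, conv f lam = f 1 • lam)
    (ha_mod : ∀ h : H, lT lam h = lam h • (𝐒 a))
    (ρ τ : (H ⊗[k] H) →ₗ[k] k) (h l : H) :
    trip lam ρ τ (h ⊗ₜ[k] l)
    = lam ((sw3 (vF ρ) LinearMap.id (thMap τ Sinv a) h) * l) := by
  -- abbreviations
  set g : H →ₗ[k] k := lam ∘ₗ LinearMap.mulRight k l with hg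
  set B1 : H →ₗ[k] H →ₗ[k] k :=
    TensorProduct.lcurry (RingHom.id k) H H k (ρ ∘ₗ LinearMap.lTensor H 𝐒) with hB1
  have B1_apply : ∀ α u : H, B1 α u = ρ (α ⊗ₜ[k] 𝐒 u) := by
    intro α u; simp [hB1]
  set W : H →ₗ[k] k := cw2 (bi2 (vF ρ) g) with hW
  set B2 : H →ₗ[k] H →ₗ[k] k :=
    ((TensorProduct.lcurry (RingHom.id k) H H k τ).flip) ∘ₗ (LinearMap.mulRight k (𝐒 a)) ∘ₗ Sinv with hB2
  have B2_apply : ∀ β γ : H, B2 β γ = τ (γ ⊗ₜ[k] (Sinv β * 𝐒 a)) := by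
    intro β γ; simp [hB2]
  -- RHS in collapsed form
  have hRHS : lam ((sw3 (vF ρ) LinearMap.id (thMap τ Sinv a) h) * l)
      = ∑ i ∈ (ℛ k h).index, W ((ℛ k h).left i) * thMap τ Sinv a ((ℛ k h).right i) := by
    rw [sw3_apply _ _ _ (ℛ k h) (fun i => ℛ k ((ℛ k h).left i)), Finset.sum_mul, map_sum]
    apply Finset.sum_congr rfl; intro i _
    rw [Finset.sum_mul, map_sum, hW, cw2_apply _ (ℛ k ((ℛ k h).left i)), Finset.sum_mul]
    apply Finset.sum_congr rfl; intro j _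
    simp only [LinearMap.id_coe, id_eq, smul_mul_assoc, map_smul, smul_eq_mul, bi2_apply,
      hg, LinearMap.coe_comp, Function.comp_apply, LinearMap.mulRight_apply]
    ring
  rw [hRHS, trip_eval]
  -- Step 1 : move the l-sums outside and package the h-sums
  rw [sum_comm_dep (ℛ k h).index (fun i => (ℛ k ((ℛ k h).left i)).index)
    (ℛ k l).index (fun p => (ℛ k ((ℛ k l).left p)).index)]
  have S1 : ∀ p ∈ (ℛ k l).index, ∀ q ∈ (ℛ k ((ℛ k l).left p)).index,
      ∑ i ∈ (ℛ k h).index, ∑ j ∈ (ℛ k ((ℛ k h).left i)).index,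
        ρ ((ℛ k ((ℛ k h).left i)).left j ⊗ₜ[k] (ℛ k ((ℛ k l).left p)).left q) *
        lam ((ℛ k ((ℛ k h).left i)).right j * (ℛ k ((ℛ k l).left p)).right q) *
        τ ((ℛ k h).right i ⊗ₜ[k] (ℛ k l).right p)
      = (∑ i ∈ (ℛ k h).index, ∑ j ∈ (ℛ k ((ℛ k h).left i)).index,
          tri3 (ρ ∘ₗ TensorProduct.mk k H H ((ℛ k ((ℛ k h).left i)).left j))
            (lam ∘ₗ LinearMap.mulLeft k ((ℛ k ((ℛ k h).left i)).right j))
            (τ ∘ₗ TensorProduct.mk k H H ((ℛ k h).right i)))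
          ((ℛ k ((ℛ k l).left p)).left q) ((ℛ k ((ℛ k l).left p)).right q)
          ((ℛ k l).right p) := by
    intro p _ q _
    simp [LinearMap.sum_apply]
  have S1' : ∀ p ∈ (ℛ k l).index,
      ∑ q ∈ (ℛ k ((ℛ k l).left p)).index,
        ∑ i ∈ (ℛ k h).index, ∑ j ∈ (ℛ k ((ℛ k h).left i)).index,
        ρ ((ℛ k ((ℛ k h).left i)).left j ⊗ₜ[k] (ℛ k ((ℛ k l).left p)).left q) *
        lam ((ℛ k ((ℛ k h).left i)).right j * (ℛ k ((ℛ k l).left p)).right q) *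
        τ ((ℛ k h).right i ⊗ₜ[k] (ℛ k l).right p)
      = ∑ q ∈ (ℛ k ((ℛ k l).left p)).index,
          (∑ i ∈ (ℛ k h).index, ∑ j ∈ (ℛ k ((ℛ k h).left i)).index,
            tri3 (ρ ∘ₗ TensorProduct.mk k H H ((ℛ k ((ℛ k h).left i)).left j))
              (lam ∘ₗ LinearMap.mulLeft k ((ℛ k ((ℛ k h).left i)).right j))
              (τ ∘ₗ TensorProduct.mk k H H ((ℛ k h).right i)))
          ((ℛ k ((ℛ k l).left p)).left q) ((ℛ k ((ℛ k l).left p)).right q)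
          ((ℛ k l).right p) := by
    intro p hp
    exact Finset.sum_congr rfl (fun q hq => S1 p hp q hq)
  rw [Finset.sum_congr rfl S1']
  rw [coassoc_sum _ (ℛ k l) (fun p => ℛ k ((ℛ k l).left p)) (fun p => ℛ k ((ℛ k l).right p))]
  -- unfold the packaged sums again and move h-sums outside
  have S3 : ∀ p ∈ (ℛ k l).index, ∀ q ∈ (ℛ k ((ℛ k l).right p)).index,
      (∑ i ∈ (ℛ k h).index, ∑ j ∈ (ℛ k ((ℛ k h).left i)).index,
          tri3 (ρ ∘ₗ TensorProduct.mk k H H ((ℛ k ((ℛ k h).left i)).left j))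
            (lam ∘ₗ LinearMap.mulLeft k ((ℛ k ((ℛ k h).left i)).right j))
            (τ ∘ₗ TensorProduct.mk k H H ((ℛ k h).right i)))
        ((ℛ k l).left p) ((ℛ k ((ℛ k l).right p)).left q) ((ℛ k ((ℛ k l).right p)).right q)
      = ∑ i ∈ (ℛ k h).index, ∑ j ∈ (ℛ k ((ℛ k h).left i)).index,
          (ρ ∘ₗ TensorProduct.mk k H H ((ℛ k ((ℛ k h).left i)).left j)) ((ℛ k l).left p) *
          lam ((ℛ k ((ℛ k h).left i)).right j * (ℛ k ((ℛ k l).right p)).left q) *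
          (τ ∘ₗ TensorProduct.mk k H H ((ℛ k h).right i)) ((ℛ k ((ℛ k l).right p)).right q) := by
    intro p _ q _
    simp [LinearMap.sum_apply]
  rw [Finset.sum_congr rfl (fun p hp => Finset.sum_congr rfl (fun q hq => S3 p hp q hq))]
  rw [sum_comm_dep (ℛ k l).index (fun p => (ℛ k ((ℛ k l).right p)).index)
    (ℛ k h).index (fun i => (ℛ k ((ℛ k h).left i)).index)]
  -- Step 4 : apply (DF) for each (i,j)
  have S4 : ∀ i ∈ (ℛ k h).index, ∀ j ∈ (ℛ k ((ℛ k h).left i)).index,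
      ∑ p ∈ (ℛ k l).index, ∑ q ∈ (ℛ k ((ℛ k l).right p)).index,
        (ρ ∘ₗ TensorProduct.mk k H H ((ℛ k ((ℛ k h).left i)).left j)) ((ℛ k l).left p) *
        lam ((ℛ k ((ℛ k h).left i)).right j * (ℛ k ((ℛ k l).right p)).left q) *
        (τ ∘ₗ TensorProduct.mk k H H ((ℛ k h).right i)) ((ℛ k ((ℛ k l).right p)).right q)
      = ∑ s ∈ (ℛ k ((ℛ k ((ℛ k h).left i)).right j)).index,
        ∑ t ∈ (ℛ k ((ℛ k ((ℛ k ((ℛ k h).left i)).right j)).left s)).index,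
          ρ ((ℛ k ((ℛ k h).left i)).left j ⊗ₜ[k]
              𝐒 ((ℛ k ((ℛ k ((ℛ k ((ℛ k h).left i)).right j)).left s)).left t)) *
          lam ((ℛ k ((ℛ k ((ℛ k ((ℛ k h).left i)).right j)).left s)).right t * l) *
          τ ((ℛ k h).right i ⊗ₜ[k]
              (Sinv ((ℛ k ((ℛ k ((ℛ k h).left i)).right j)).right s) * 𝐒 a)) := by
    intro i _ j _
    have key := lemDF lam a Sinv hl hr hlam_int ha_mod
      ((ℛ k ((ℛ k h).left i)).right j) l
      (ρ ∘ₗ TensorProduct.mk k H H ((ℛ k ((ℛ k h).left i)).left j))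
      (τ ∘ₗ TensorProduct.mk k H H ((ℛ k h).right i))
    simpa only [LinearMap.coe_comp, Function.comp_apply, TensorProduct.mk_apply] using key
  rw [Finset.sum_congr rfl (fun i hi => Finset.sum_congr rfl (fun j hj => S4 i hi j hj))]
  have SA : ∀ i ∈ (ℛ k h).index,
      ∑ j ∈ (ℛ k ((ℛ k h).left i)).index,
        ∑ s ∈ (ℛ k ((ℛ k ((ℛ k h).left i)).right j)).index,
        ∑ t ∈ (ℛ k ((ℛ k ((ℛ k ((ℛ k h).left i)).right j)).left s)).index,
          ρ ((ℛ k ((ℛ k h).left i)).left j ⊗ₜ[k]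
              𝐒 ((ℛ k ((ℛ k ((ℛ k ((ℛ k h).left i)).right j)).left s)).left t)) *
          lam ((ℛ k ((ℛ k ((ℛ k ((ℛ k h).left i)).right j)).left s)).right t * l) *
          τ ((ℛ k h).right i ⊗ₜ[k]
              (Sinv ((ℛ k ((ℛ k ((ℛ k h).left i)).right j)).right s) * 𝐒 a))
      = ∑ j ∈ (ℛ k ((ℛ k h).left i)).index,
          sc1 W B2 ((ℛ k ((ℛ k h).left i)).left j) ((ℛ k ((ℛ k h).left i)).right j)
            ((ℛ k h).right i) := by
    intro i _
    -- Step 5 : package as a trilinear map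
    have S5 : ∀ j ∈ (ℛ k ((ℛ k h).left i)).index,
        ∀ s ∈ (ℛ k ((ℛ k ((ℛ k h).left i)).right j)).index,
        ∑ t ∈ (ℛ k ((ℛ k ((ℛ k ((ℛ k h).left i)).right j)).left s)).index,
            ρ ((ℛ k ((ℛ k h).left i)).left j ⊗ₜ[k]
                𝐒 ((ℛ k ((ℛ k ((ℛ k ((ℛ k h).left i)).right j)).left s)).left t)) *
            lam ((ℛ k ((ℛ k ((ℛ k ((ℛ k h).left i)).right j)).left s)).right t * l) *
            τ ((ℛ k h).right i ⊗ₜ[k]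
                (Sinv ((ℛ k ((ℛ k ((ℛ k h).left i)).right j)).right s) * 𝐒 a))
        = sc3 (cw2L ∘ₗ (sc3 B1 g))
            (τ ∘ₗ TensorProduct.mk k H H ((ℛ k h).right i) ∘ₗ
              LinearMap.mulRight k (𝐒 a) ∘ₗ Sinv)
            ((ℛ k ((ℛ k h).left i)).left j)
            ((ℛ k ((ℛ k ((ℛ k h).left i)).right j)).left s)
            ((ℛ k ((ℛ k ((ℛ k h).left i)).right j)).right s) := by
      intro j _ s _
      rw [sc3_apply, LinearMap.comp_apply (f := cw2L), cw2L_eq,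
        cw2_apply _ (ℛ k ((ℛ k ((ℛ k ((ℛ k h).left i)).right j)).left s))]
      simp only [LinearMap.coe_comp, Function.comp_apply, LinearMap.mulRight_apply,
        TensorProduct.mk_apply, sc3_apply, smul_eq_mul, Finset.mul_sum]
      apply Finset.sum_congr rfl; intro t _
      rw [B1_apply]
      simp only [hg, LinearMap.coe_comp, Function.comp_apply, LinearMap.mulRight_apply]
      ring
    rw [Finset.sum_congr rfl (fun j hj => Finset.sum_congr rfl (fun s hs => S5 j hj s hs))]
    rw [← coassoc_sum _ (ℛ k ((ℛ k h).left i))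
      (fun j => ℛ k ((ℛ k ((ℛ k h).left i)).left j))
      (fun j => ℛ k ((ℛ k ((ℛ k h).left i)).right j))]
    apply Finset.sum_congr rfl; intro j _
    -- Step 6 : expose the inner sum
    have S6 : ∑ w ∈ (ℛ k ((ℛ k ((ℛ k h).left i)).left j)).index,
        sc3 (cw2L ∘ₗ (sc3 B1 g))
          (τ ∘ₗ TensorProduct.mk k H H ((ℛ k h).right i) ∘ₗ
            LinearMap.mulRight k (𝐒 a) ∘ₗ Sinv)
          ((ℛ k ((ℛ k ((ℛ k h).left i)).left j)).left w)
          ((ℛ k ((ℛ k ((ℛ k h).left i)).left j)).right w)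
          ((ℛ k ((ℛ k h).left i)).right j)
        = ∑ w ∈ (ℛ k ((ℛ k ((ℛ k h).left i)).left j)).index,
          ∑ t ∈ (ℛ k ((ℛ k ((ℛ k ((ℛ k h).left i)).left j)).right w)).index,
            (((τ ∘ₗ TensorProduct.mk k H H ((ℛ k h).right i) ∘ₗ
              LinearMap.mulRight k (𝐒 a) ∘ₗ Sinv) ((ℛ k ((ℛ k h).left i)).right j)) •
              sc3 B1 g)
            ((ℛ k ((ℛ k ((ℛ k h).left i)).left j)).left w)
            ((ℛ k ((ℛ k ((ℛ k ((ℛ k h).left i)).left j)).right w)).left t)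
            ((ℛ k ((ℛ k ((ℛ k ((ℛ k h).left i)).left j)).right w)).right t) := by
      apply Finset.sum_congr rfl; intro w _
      rw [sc3_apply, LinearMap.comp_apply (f := cw2L), cw2L_eq,
        cw2_apply _ (ℛ k ((ℛ k ((ℛ k ((ℛ k h).left i)).left j)).right w)),
        Finset.smul_sum]
      simp only [LinearMap.smul_apply]
    rw [S6]
    rw [← coassoc_sum _ (ℛ k ((ℛ k ((ℛ k h).left i)).left j))
      (fun w => ℛ k ((ℛ k ((ℛ k ((ℛ k h).left i)).left j)).left w))
      (fun w => ℛ k ((ℛ k ((ℛ k ((ℛ k h).left i)).left j)).right w))]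
    -- Step 7 : collapse to W
    rw [sc1_apply, B2_apply, hW, cw2_apply _ (ℛ k ((ℛ k ((ℛ k h).left i)).left j))]
    rw [smul_eq_mul, mul_comm, Finset.mul_sum]
    apply Finset.sum_congr rfl; intro w _
    simp only [LinearMap.smul_apply, sc3_apply, smul_eq_mul, bi2_apply]
    rw [vF_apply ρ (ℛ k ((ℛ k ((ℛ k ((ℛ k h).left i)).left j)).left w))]
    simp only [LinearMap.coe_comp, Function.comp_apply, TensorProduct.mk_apply,
      LinearMap.mulRight_apply, hg, Finset.sum_mul, Finset.mul_sum]
    apply Finset.sum_congr rfl; intro t _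
    rw [B1_apply]
    ring
  rw [Finset.sum_congr rfl SA]
  rw [coassoc_sum (sc1 W B2) (ℛ k h) (fun i => ℛ k ((ℛ k h).left i))
    (fun i => ℛ k ((ℛ k h).right i))]
  apply Finset.sum_congr rfl; intro i _
  rw [thMap_apply τ Sinv a (ℛ k ((ℛ k h).right i)), Finset.mul_sum]
  apply Finset.sum_congr rfl; intro j _
  rw [sc1_apply, B2_apply, smul_eq_mul]
end Lam2
/-! ### assembly helpers -/

lemma counit_sw3 (f p : H →ₗ[k] k) :
    (Coalgebra.counit (R := k)) ∘ₗ (sw3 f LinearMap.id p) = conv f p := by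
  ext x
  simp only [LinearMap.coe_comp, Function.comp_apply]
  rw [sw3_apply _ _ _ (ℛ k x) (fun i => ℛ k ((ℛ k x).left i)), map_sum,
    conv_apply f p (ℛ k x)]
  apply Finset.sum_congr rfl; intro i _
  rw [map_sum]
  have key := counit_sum_right f (ℛ k ((ℛ k x).left i))
  calc ∑ j ∈ (ℛ k ((ℛ k x).left i)).index,
        Coalgebra.counit (R := k)
          ((f ((ℛ k ((ℛ k x).left i)).left j) * p ((ℛ k x).right i)) •
            LinearMap.id ((ℛ k ((ℛ k x).left i)).right j))
      = (∑ j ∈ (ℛ k ((ℛ k x).left i)).index,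
          Coalgebra.counit (R := k) ((ℛ k ((ℛ k x).left i)).right j) •
            f ((ℛ k ((ℛ k x).left i)).left j)) * p ((ℛ k x).right i) := by
        rw [Finset.sum_mul]
        apply Finset.sum_congr rfl; intro j _
        simp only [LinearMap.id_coe, id_eq, map_smul, smul_eq_mul]
        ring
    _ = f ((ℛ k x).left i) * p ((ℛ k x).right i) := by rw [key]

lemma counit_chiMap (Sinv : H →ₗ[k] H) (hr : ∀ h : H, 𝐒 (Sinv h) = h) (α : H →ₐ[k] k) :
    (Coalgebra.counit (R := k)) ∘ₗ (chiMap Sinv α.toLinearMap) = α.toLinearMap := by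
  ext x
  simp only [LinearMap.coe_comp, Function.comp_apply]
  rw [chiMap_apply _ _ (ℛ k x), map_sum]
  have key := counit_sum_left (α.toLinearMap) (ℛ k x)
  simp only [AlgHom.toLinearMap_apply] at key ⊢
  rw [← key]
  apply Finset.sum_congr rfl; intro i _
  rw [map_smul, counit_Sinv Sinv hr, counit_Sinv Sinv hr]
  simp [mul_comm]

lemma conv_alg_right (α : H →ₐ[k] k) :
    conv α.toLinearMap (α.toLinearMap ∘ₗ 𝐒) = Coalgebra.counit (R := k) := by
  ext x
  rw [conv_apply _ _ (ℛ k x)]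
  have : ∀ i ∈ (ℛ k x).index,
      α.toLinearMap ((ℛ k x).left i) * (α.toLinearMap ∘ₗ (𝐒 : H →ₗ[k] H)) ((ℛ k x).right i)
      = α.toLinearMap ((ℛ k x).left i * 𝐒 ((ℛ k x).right i)) := by
    intro i _; simp [map_mul]
  rw [Finset.sum_congr rfl this, ← map_sum, sum_mul_antipode_eq_smul (ℛ k x)]
  simp

lemma conv_alg_left (α : H →ₐ[k] k) :
    conv (α.toLinearMap ∘ₗ 𝐒) α.toLinearMap = Coalgebra.counit (R := k) := by
  ext x
  rw [conv_apply _ _ (ℛ k x)]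
  have : ∀ i ∈ (ℛ k x).index,
      (α.toLinearMap ∘ₗ (𝐒 : H →ₗ[k] H)) ((ℛ k x).left i) * α.toLinearMap ((ℛ k x).right i)
      = α.toLinearMap (𝐒 ((ℛ k x).left i) * (ℛ k x).right i) := by
    intro i _; simp [map_mul]
  rw [Finset.sum_congr rfl this, ← map_sum, sum_antipode_mul_eq_smul (ℛ k x)]
  simp

/-- `χ ∘ rT (α⁻¹) = Sinv²`. -/
lemma chi_rT (Sinv : H →ₗ[k] H) (α : H →ₐ[k] k) (x : H) :
    chiMap Sinv α.toLinearMap (rT (α.toLinearMap ∘ₗ 𝐒) x) = Sinv (Sinv x) := by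
  rw [rT_apply _ (ℛ k x), map_sum]
  have step : ∀ i ∈ (ℛ k x).index,
      chiMap Sinv α.toLinearMap
        ((α.toLinearMap ∘ₗ (𝐒 : H →ₗ[k] H)) ((ℛ k x).right i) • (ℛ k x).left i)
      = ∑ j ∈ (ℛ k ((ℛ k x).left i)).index,
          triM1 (Sinv ∘ₗ Sinv) α.toLinearMap (α.toLinearMap ∘ₗ (𝐒 : H →ₗ[k] H))
            ((ℛ k ((ℛ k x).left i)).left j) ((ℛ k ((ℛ k x).left i)).right j)
            ((ℛ k x).right i) := by
    intro i _
    rw [map_smul, chiMap_apply _ _ (ℛ k ((ℛ k x).left i)), Finset.smul_sum]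
    apply Finset.sum_congr rfl; intro j _
    simp only [triM1_apply, LinearMap.coe_comp, Function.comp_apply, smul_smul]
    rw [mul_comm]
  rw [Finset.sum_congr rfl step,
    coassoc_sum _ (ℛ k x) (fun i => ℛ k ((ℛ k x).left i)) (fun i => ℛ k ((ℛ k x).right i))]
  have step2 : ∀ i ∈ (ℛ k x).index,
      ∑ j ∈ (ℛ k ((ℛ k x).right i)).index,
        triM1 (Sinv ∘ₗ Sinv) α.toLinearMap (α.toLinearMap ∘ₗ (𝐒 : H →ₗ[k] H))
          ((ℛ k x).left i) ((ℛ k ((ℛ k x).right i)).left j)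
          ((ℛ k ((ℛ k x).right i)).right j)
      = Coalgebra.counit (R := k) ((ℛ k x).right i) • (Sinv ∘ₗ Sinv) ((ℛ k x).left i) := by
    intro i _
    have inner : ∑ j ∈ (ℛ k ((ℛ k x).right i)).index,
        α.toLinearMap ((ℛ k ((ℛ k x).right i)).left j) *
          (α.toLinearMap ∘ₗ (𝐒 : H →ₗ[k] H)) ((ℛ k ((ℛ k x).right i)).right j)
        = Coalgebra.counit (R := k) ((ℛ k x).right i) := by
      rw [← conv_apply _ _ (ℛ k ((ℛ k x).right i)), conv_alg_right]
    rw [← inner, Finset.sum_smul]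
    apply Finset.sum_congr rfl; intro j _
    simp only [triM1_apply]
  rw [Finset.sum_congr rfl step2]
  exact counit_sum_right (Sinv ∘ₗ Sinv) (ℛ k x)
/-- Forward direction: expansion of `lam (χ(h) l)` as a `trip`. -/
lemma fwd (lam : H →ₗ[k] k) (α : H →ₐ[k] k) (Sinv : H →ₗ[k] H) (ω ωi : H →ₗ[k] k)
    (hSinv2 : ∀ y : H, Sinv (Sinv y) = lT ωi (rT ω y)) (h l : H) :
    trip lam ((LinearMap.mul' k k) ∘ₗ TensorProduct.map ωi (Coalgebra.counit (R := k)))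
      ((LinearMap.mul' k k) ∘ₗ
        TensorProduct.map (conv ω α.toLinearMap) (Coalgebra.counit (R := k)))
      (h ⊗ₜ[k] l)
    = lam ((chiMap Sinv α.toLinearMap h) * l) := by
  -- Part A : collapse the trip
  have partA : trip lam ((LinearMap.mul' k k) ∘ₗ TensorProduct.map ωi (Coalgebra.counit (R := k)))
      ((LinearMap.mul' k k) ∘ₗ
        TensorProduct.map (conv ω α.toLinearMap) (Coalgebra.counit (R := k)))
      (h ⊗ₜ[k] l)
      = ∑ i ∈ (ℛ k h).index,
          cw2 (bi2 ωi (lam ∘ₗ LinearMap.mulRight k l)) ((ℛ k h).left i) *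
            conv ω α.toLinearMap ((ℛ k h).right i) := by
    rw [trip_eval]
    apply Finset.sum_congr rfl; intro i _
    rw [cw2_apply _ (ℛ k ((ℛ k h).left i)), Finset.sum_mul]
    apply Finset.sum_congr rfl; intro j _
    simp only [LinearMap.coe_comp, Function.comp_apply, TensorProduct.map_tmul,
      LinearMap.mul'_apply, bi2_apply, LinearMap.mulRight_apply]
    -- remaining : collapse the two l-sums
    have inner1 : ∀ p ∈ (ℛ k l).index,
        ∑ q ∈ (ℛ k ((ℛ k l).left p)).index,
          ωi ((ℛ k ((ℛ k h).left i)).left j) *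
              Coalgebra.counit (R := k) ((ℛ k ((ℛ k l).left p)).left q) *
            lam ((ℛ k ((ℛ k h).left i)).right j * (ℛ k ((ℛ k l).left p)).right q) *
            (conv ω α.toLinearMap ((ℛ k h).right i) *
              Coalgebra.counit (R := k) ((ℛ k l).right p))
        = ωi ((ℛ k ((ℛ k h).left i)).left j) *
            lam ((ℛ k ((ℛ k h).left i)).right j * (ℛ k l).left p) *
            (conv ω α.toLinearMap ((ℛ k h).right i) *
              Coalgebra.counit (R := k) ((ℛ k l).right p)) := by
      intro p _
      have key := counit_sum_left
        (lam ∘ₗ LinearMap.mulLeft k ((ℛ k ((ℛ k h).left i)).right j)) (ℛ k ((ℛ k l).left p))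
      simp only [LinearMap.coe_comp, Function.comp_apply, LinearMap.mulLeft_apply,
        smul_eq_mul] at key
      calc ∑ q ∈ (ℛ k ((ℛ k l).left p)).index,
            ωi ((ℛ k ((ℛ k h).left i)).left j) *
                Coalgebra.counit (R := k) ((ℛ k ((ℛ k l).left p)).left q) *
              lam ((ℛ k ((ℛ k h).left i)).right j * (ℛ k ((ℛ k l).left p)).right q) *
              (conv ω α.toLinearMap ((ℛ k h).right i) *
                Coalgebra.counit (R := k) ((ℛ k l).right p))
          = (ωi ((ℛ k ((ℛ k h).left i)).left j) *
              (conv ω α.toLinearMap ((ℛ k h).right i) *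
                Coalgebra.counit (R := k) ((ℛ k l).right p))) *
              ∑ q ∈ (ℛ k ((ℛ k l).left p)).index,
                Coalgebra.counit (R := k) ((ℛ k ((ℛ k l).left p)).left q) *
                  lam ((ℛ k ((ℛ k h).left i)).right j * (ℛ k ((ℛ k l).left p)).right q) := by
            rw [Finset.mul_sum]
            apply Finset.sum_congr rfl; intro q _; ring
        _ = _ := by rw [key]; ring
    rw [Finset.sum_congr rfl inner1]
    have key2 := counit_sum_right
      (lam ∘ₗ LinearMap.mulLeft k ((ℛ k ((ℛ k h).left i)).right j)) (ℛ k l)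
    simp only [LinearMap.coe_comp, Function.comp_apply, LinearMap.mulLeft_apply,
      smul_eq_mul] at key2
    calc ∑ p ∈ (ℛ k l).index,
          ωi ((ℛ k ((ℛ k h).left i)).left j) *
            lam ((ℛ k ((ℛ k h).left i)).right j * (ℛ k l).left p) *
            (conv ω α.toLinearMap ((ℛ k h).right i) *
              Coalgebra.counit (R := k) ((ℛ k l).right p))
        = (ωi ((ℛ k ((ℛ k h).left i)).left j) * conv ω α.toLinearMap ((ℛ k h).right i)) *
            ∑ p ∈ (ℛ k l).index, Coalgebra.counit (R := k) ((ℛ k l).right p) *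
              lam ((ℛ k ((ℛ k h).left i)).right j * (ℛ k l).left p) := by
          rw [Finset.mul_sum]
          apply Finset.sum_congr rfl; intro p _; ring
      _ = _ := by rw [key2]; ring
  -- Part B : expand the chi side
  have partB : lam ((chiMap Sinv α.toLinearMap h) * l)
      = ∑ i ∈ (ℛ k h).index,
          cw2 (bi2 ωi (lam ∘ₗ LinearMap.mulRight k l)) ((ℛ k h).left i) *
            conv ω α.toLinearMap ((ℛ k h).right i) := by
    rw [chiMap_apply _ _ (ℛ k h), Finset.sum_mul, map_sum]
    have step : ∀ i ∈ (ℛ k h).index,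
        lam ((α.toLinearMap ((ℛ k h).right i) • Sinv (Sinv ((ℛ k h).left i))) * l)
        = ∑ j ∈ (ℛ k ((ℛ k h).left i)).index,
            tri3 (cw2 (bi2 ωi (lam ∘ₗ LinearMap.mulRight k l))) ω α.toLinearMap
              ((ℛ k ((ℛ k h).left i)).left j) ((ℛ k ((ℛ k h).left i)).right j)
              ((ℛ k h).right i) := by
      intro i _
      rw [hSinv2, show lT ωi (rT ω ((ℛ k h).left i))
          = sw3 ωi LinearMap.id ω ((ℛ k h).left i) from
            congrFun (congrArg DFunLike.coe (lT_comp_rT ωi ω)) _,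
        sw3_apply _ _ _ (ℛ k ((ℛ k h).left i))
          (fun j => ℛ k ((ℛ k ((ℛ k h).left i)).left j)),
        smul_mul_assoc, map_smul, Finset.sum_mul, map_sum, Finset.smul_sum]
      apply Finset.sum_congr rfl; intro j _
      rw [Finset.sum_mul, map_sum, Finset.smul_sum,
        tri3_apply, cw2_apply _ (ℛ k ((ℛ k ((ℛ k h).left i)).left j)), Finset.sum_mul,
        Finset.sum_mul]
      apply Finset.sum_congr rfl; intro w _
      simp only [LinearMap.id_coe, id_eq, smul_mul_assoc, map_smul, smul_eq_mul,
        bi2_apply, LinearMap.coe_comp, Function.comp_apply, LinearMap.mulRight_apply,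
        AlgHom.toLinearMap_apply]
      ring
    rw [Finset.sum_congr rfl step,
      coassoc_sum _ (ℛ k h) (fun i => ℛ k ((ℛ k h).left i)) (fun i => ℛ k ((ℛ k h).right i))]
    apply Finset.sum_congr rfl; intro i _
    rw [conv_apply _ _ (ℛ k ((ℛ k h).right i)), Finset.mul_sum]
    apply Finset.sum_congr rfl; intro j _
    simp only [tri3_apply, AlgHom.toLinearMap_apply]
    ring
  rw [partA, partB]
/-- $S^2$ is co-inner iff the integral satisfies
$λ(lh) = ρ(h_1 ⊗ l_1) λ(h_2 l_2) τ(h_3 ⊗ l_3)$ for some linear forms $ρ, τ$ on $H ⊗ H$. -/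
theorem antipode_sq_coinner_iff
    (lam : H →ₗ[k] k) (hlam_ne : lam ≠ 0)
    (hlam_int : ∀ f : H →ₗ[k] k, conv f lam = f 1 • lam)
    (a : H) (ha_ne : a ≠ 0) (ha_grp : Coalgebra.comul (R := k) a = a ⊗ₜ[k] a)
    (ha_mod : ∀ h : H, lT lam h = lam h • (𝐒 a))
    (ha_S2 : ∀ h : H, lam (𝐒 (𝐒 h)) = lam (a * h * 𝐒 a))
    (Sinv : H →ₗ[k] H) (hSinv_l : ∀ h : H, Sinv (𝐒 h) = h)
    (hSinv_r : ∀ h : H, 𝐒 (Sinv h) = h)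
    (α : H →ₐ[k] k)
    (hα : ∀ h l : H, lam (l * h) = lam ((chiMap Sinv α.toLinearMap h) * l))
    (hχ_bij : Function.Bijective (chiMap Sinv α.toLinearMap))
    (hχ_mul : ∀ h l : H, chiMap Sinv α.toLinearMap (h * l) =
      chiMap Sinv α.toLinearMap h * chiMap Sinv α.toLinearMap l)
    (hinj_r : ∀ h h' : H, (∀ l : H, lam (l * h) = lam (l * h')) → h = h')
    (hinj_l : ∀ h h' : H, (∀ l : H, lam (h * l) = lam (h' * l)) → h = h')
    (himg_rl : ∀ h : H, ∃ h' : H, ∀ l : H, lam (l * h) = lam (h' * l))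
    (himg_lr : ∀ h : H, ∃ h' : H, ∀ l : H, lam (h * l) = lam (l * h'))
    (hdense : ∀ (f : H →ₗ[k] k) (s : Finset H), ∃ h : H, ∀ x ∈ s, lam (x * h) = f x) :
    (∃ ω ωi : H →ₗ[k] k, conv ω ωi = Coalgebra.counit (R := k) ∧
        conv ωi ω = Coalgebra.counit (R := k) ∧
        ∀ h : H, 𝐒 (𝐒 h) = sw3 ω LinearMap.id ωi h) ↔
      (∃ ρ τ : (H ⊗[k] H) →ₗ[k] k, ∀ h l : H, lam (l * h) = trip lam ρ τ (h ⊗ₜ[k] l)) := by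
  constructor
  · -- (⇒)
    rintro ⟨ω, ωi, hc1, hc2, hS⟩
    have hSS : ∀ y : H, 𝐒 (𝐒 y) = lT ω (rT ωi y) := by
      intro y
      rw [hS y]
      exact (congrFun (congrArg DFunLike.coe (lT_comp_rT ω ωi)) y).symm
    have e1 : lT ωi ∘ₗ lT ω = LinearMap.id := by rw [lT_comp, hc1, lT_counit]
    have e2 : rT ω ∘ₗ rT ωi = LinearMap.id := by rw [rT_comp, hc1, rT_counit]
    have hSinv2 : ∀ y : H, Sinv (Sinv y) = lT ωi (rT ω y) := by
      have e0 : ∀ z : H, lT ωi (rT ω (𝐒 (𝐒 z))) = z := by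
        intro z
        rw [hSS z]
        have c1 : rT ω (lT ω (rT ωi z)) = lT ω (rT ω (rT ωi z)) :=
          congrFun (congrArg DFunLike.coe ((rT_comp_lT ω ω).trans (lT_comp_rT ω ω).symm))
            (rT ωi z)
        rw [c1, show rT ω (rT ωi z) = z from congrFun (congrArg DFunLike.coe e2) z]
        exact congrFun (congrArg DFunLike.coe e1) z
      intro y
      have := e0 (Sinv (Sinv y))
      rw [hSinv_r, hSinv_r] at this
      exact this.symm
    refine ⟨(LinearMap.mul' k k) ∘ₗ TensorProduct.map ωi (Coalgebra.counit (R := k)),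
      (LinearMap.mul' k k) ∘ₗ
        TensorProduct.map (conv ω α.toLinearMap) (Coalgebra.counit (R := k)), ?_⟩
    intro h l
    rw [hα h l]
    exact (fwd lam α Sinv ω ωi hSinv2 h l).symm
  · -- (⇐)
    rintro ⟨ρ, τ, htrip⟩
    have hG : ∀ h : H, chiMap Sinv α.toLinearMap h
        = sw3 (vF ρ) LinearMap.id (thMap τ Sinv a) h := by
      intro h
      apply hinj_l
      intro l
      rw [← hα h l, htrip h l, lemG lam a Sinv hSinv_l hSinv_r hlam_int ha_mod ρ τ h l]
    have hGmap : chiMap Sinv α.toLinearMap = sw3 (vF ρ) LinearMap.id (thMap τ Sinv a) :=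
      LinearMap.ext hG
    have hωθ : conv (vF ρ) (thMap τ Sinv a) = α.toLinearMap := by
      rw [← counit_chiMap Sinv hSinv_r α, hGmap, counit_sw3]
    have hconv1 : conv (vF ρ) (conv (thMap τ Sinv a) (α.toLinearMap ∘ₗ 𝐒))
        = Coalgebra.counit (R := k) := by
      rw [← conv_assoc, hωθ, conv_alg_right]
    have hswap : chiMap Sinv α.toLinearMap = rT (thMap τ Sinv a) ∘ₗ lT (vF ρ) := by
      rw [hGmap, rT_comp_lT]
    have hswap2 : chiMap Sinv α.toLinearMap = lT (vF ρ) ∘ₗ rT (thMap τ Sinv a) := by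
      rw [hGmap, lT_comp_rT]
    have hbij : Function.Bijective (lT (vF ρ)) := by
      constructor
      · intro u v huv
        apply hχ_bij.1
        have e : ∀ z : H, chiMap Sinv α.toLinearMap z = rT (thMap τ Sinv a) (lT (vF ρ) z) :=
          fun z => congrFun (congrArg DFunLike.coe hswap) z
        rw [e u, e v, huv]
      · intro y
        obtain ⟨z, hz⟩ := hχ_bij.2 y
        refine ⟨rT (thMap τ Sinv a) z, ?_⟩
        have e : chiMap Sinv α.toLinearMap z
            = lT (vF ρ) (rT (thMap τ Sinv a) z) :=
          congrFun (congrArg DFunLike.coe hswap2) z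
        rw [← e, hz]
    have hlTr : lT (conv (thMap τ Sinv a) (α.toLinearMap ∘ₗ 𝐒)) ∘ₗ lT (vF ρ)
        = LinearMap.id := by rw [lT_comp, hconv1, lT_counit]
    have hconv2 : conv (conv (thMap τ Sinv a) (α.toLinearMap ∘ₗ 𝐒)) (vF ρ)
        = Coalgebra.counit (R := k) := by
      have h1 : ∀ z : H, lT (conv (thMap τ Sinv a) (α.toLinearMap ∘ₗ 𝐒)) (lT (vF ρ) z) = z :=
        fun z => congrFun (congrArg DFunLike.coe hlTr) z
      have h2 : ∀ z : H, lT (vF ρ) (lT (conv (thMap τ Sinv a) (α.toLinearMap ∘ₗ 𝐒)) z) = z := by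
        intro z
        obtain ⟨u, hu⟩ := hbij.2 z
        rw [← hu, h1 u]
      have e : lT (vF ρ) ∘ₗ lT (conv (thMap τ Sinv a) (α.toLinearMap ∘ₗ 𝐒))
          = LinearMap.id := LinearMap.ext h2
      rw [lT_comp] at e
      calc conv (conv (thMap τ Sinv a) (α.toLinearMap ∘ₗ 𝐒)) (vF ρ)
          = (Coalgebra.counit (R := k)) ∘ₗ
              lT (conv (conv (thMap τ Sinv a) (α.toLinearMap ∘ₗ 𝐒)) (vF ρ)) :=
            (counit_comp_lT _).symm
        _ = (Coalgebra.counit (R := k)) ∘ₗ LinearMap.id := by rw [e]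
        _ = Coalgebra.counit (R := k) := by ext x; simp
    have hSinv2 : ∀ x : H,
        Sinv (Sinv x) = lT (vF ρ) (rT (conv (thMap τ Sinv a) (α.toLinearMap ∘ₗ 𝐒)) x) := by
      intro x
      calc Sinv (Sinv x) = chiMap Sinv α.toLinearMap (rT (α.toLinearMap ∘ₗ 𝐒) x) :=
            (chi_rT Sinv α x).symm
        _ = lT (vF ρ) (rT (thMap τ Sinv a) (rT (α.toLinearMap ∘ₗ 𝐒) x)) :=
            congrFun (congrArg DFunLike.coe hswap2) _
        _ = lT (vF ρ) (rT (conv (thMap τ Sinv a) (α.toLinearMap ∘ₗ 𝐒)) x) := by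
            rw [show rT (thMap τ Sinv a) (rT (α.toLinearMap ∘ₗ 𝐒) x)
              = rT (conv (thMap τ Sinv a) (α.toLinearMap ∘ₗ 𝐒)) x from
                congrFun (congrArg DFunLike.coe (rT_comp _ _)) x]
    refine ⟨conv (thMap τ Sinv a) (α.toLinearMap ∘ₗ 𝐒), vF ρ, hconv2, hconv1, ?_⟩
    intro h
    have hid3 : ∀ z : H, rT (vF ρ) (rT (conv (thMap τ Sinv a) (α.toLinearMap ∘ₗ 𝐒)) z) = z := by
      intro z
      have : rT (vF ρ) ∘ₗ rT (conv (thMap τ Sinv a) (α.toLinearMap ∘ₗ 𝐒))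
          = LinearMap.id := by rw [rT_comp, hconv1, rT_counit]
      exact congrFun (congrArg DFunLike.coe this) z
    have e0 : ∀ z : H,
        rT (vF ρ) (lT (conv (thMap τ Sinv a) (α.toLinearMap ∘ₗ 𝐒)) (Sinv (Sinv z))) = z := by
      intro z
      rw [hSinv2 z,
        show lT (conv (thMap τ Sinv a) (α.toLinearMap ∘ₗ 𝐒))
          (lT (vF ρ) (rT (conv (thMap τ Sinv a) (α.toLinearMap ∘ₗ 𝐒)) z))
          = rT (conv (thMap τ Sinv a) (α.toLinearMap ∘ₗ 𝐒)) z from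
          congrFun (congrArg DFunLike.coe hlTr) _]
      exact hid3 z
    have := e0 (𝐒 (𝐒 h))
    rw [hSinv_l, hSinv_l] at this
    rw [← this]
    exact congrFun (congrArg DFunLike.coe
      (rT_comp_lT (conv (thMap τ Sinv a) (α.toLinearMap ∘ₗ 𝐒)) (vF ρ))) h
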